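/- arXiv:1701.00544 — 14 statements merged into one kernel-verified Lean document; each statement's English description precedes it below -/
import Mathlib

section
/- For all integers n ≥ 0 and 0 ≤ m ≤ n, and any sequence a : ℕ → ℝ with b n = ∑_{k=0}^n C(n,k) a k, we have ∑_{k=0}^n C(n,k) * C(k,m) * a k = C(n,m) * ∇^m b n, where ∇ is the backward difference (∇f)(n) = f(n) - f(n-1) (with f(-1) interpreted via n ≥ 1 when applied, and ∇^0 b n = b n). -/
open Finset

private lemma aux_pascal (a : ℕ → ℝ) (N m : ℕ) :
    ∑ j ∈ Finset.range (N+2), (((N+1).choose j : ℕ) : ℝ) * a (j + m) =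
      ∑ j ∈ Finset.range (N+1), ((N.choose j : ℕ) : ℝ) * a (j + m) +
      ∑ j ∈ Finset.range (N+1), ((N.choose j : ℕ) : ℝ) * a (j + (m+1)) := by
  rw [Finset.sum_range_succ' (fun j => (((N+1).choose j : ℕ) : ℝ) * a (j + m))]
  have e1 : ∀ j, (((N+1).choose (j+1) : ℕ) : ℝ) * a (j + 1 + m)
      = ((N.choose j : ℕ) : ℝ) * a (j + (m+1)) + ((N.choose (j+1) : ℕ) : ℝ) * a (j + 1 + m) := by
    intro j
    rw [Nat.choose_succ_succ]
    push_cast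
    rw [show j + 1 + m = j + (m + 1) by ring]
    ring
  rw [Finset.sum_congr rfl (fun j _ => e1 j), Finset.sum_add_distrib]
  have e2 : ∑ j ∈ Finset.range (N+1), ((N.choose (j+1) : ℕ) : ℝ) * a (j + 1 + m)
      = ∑ j ∈ Finset.range N, ((N.choose (j+1) : ℕ) : ℝ) * a (j + 1 + m) := by
    rw [Finset.sum_range_succ, Nat.choose_succ_self]
    simp
  have e3 : ∑ j ∈ Finset.range (N+1), ((N.choose j : ℕ) : ℝ) * a (j + m)
      = ∑ j ∈ Finset.range N, ((N.choose (j+1) : ℕ) : ℝ) * a (j + 1 + m)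
        + ((N.choose 0 : ℕ) : ℝ) * a (0 + m) := by
    exact Finset.sum_range_succ' _ _
  rw [e2, e3]
  simp
  ring

private lemma key_diff (a b : ℕ → ℝ)
    (hb : ∀ n, b n = ∑ k ∈ Finset.range (n+1), (n.choose k : ℝ) * a k) :
    ∀ m n, m ≤ n →
      ∑ i ∈ Finset.range (m+1), (-1 : ℝ)^i * (m.choose i : ℝ) * b (n - i) =
      ∑ j ∈ Finset.range (n - m + 1), ((n - m).choose j : ℝ) * a (j + m) := by
  intro m
  induction m with
  | zero =>
    intro n _
    simp [hb n]
  | succ m ih =>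
    intro n hn
    have hmn : m ≤ n - 1 := Nat.le_sub_one_of_lt hn
    have hmn' : m ≤ n := le_of_lt hn
    have h1 := ih n hmn'
    have h2 := ih (n - 1) hmn
    have hL : ∑ i ∈ Finset.range (m+2), (-1 : ℝ)^i * ((m+1).choose i : ℝ) * b (n - i)
        = (∑ i ∈ Finset.range (m+1), (-1 : ℝ)^i * (m.choose i : ℝ) * b (n - i))
          - ∑ i ∈ Finset.range (m+1), (-1 : ℝ)^i * (m.choose i : ℝ) * b (n - 1 - i) := by
      have e1 : ∑ i ∈ Finset.range (m+2), (-1 : ℝ)^i * ((m+1).choose i : ℝ) * b (n - i)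
          = b n + ∑ i ∈ Finset.range (m+1),
              (-1 : ℝ)^(i+1) * (((m.choose i : ℕ) : ℝ) + ((m.choose (i+1) : ℕ) : ℝ)) * b (n - (i+1)) := by
        rw [Finset.sum_range_succ' (fun i => (-1 : ℝ)^i * ((m+1).choose i : ℝ) * b (n - i))]
        simp only [Nat.choose_succ_succ, Nat.succ_eq_add_one, Nat.cast_add, pow_zero,
          Nat.choose_zero_right, Nat.cast_one, one_mul, mul_one, Nat.sub_zero]
        ring
      have e2 : ∑ i ∈ Finset.range (m+1), (-1 : ℝ)^(i+1) * ((m.choose (i+1) : ℕ) : ℝ) * b (n - (i+1))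
          = (∑ i ∈ Finset.range (m+1), (-1 : ℝ)^i * (m.choose i : ℝ) * b (n - i)) - b n := by
        have := Finset.sum_range_succ' (fun i => (-1 : ℝ)^i * (m.choose i : ℝ) * b (n - i)) m
        rw [Finset.sum_range_succ (fun i => (-1 : ℝ)^(i+1) * ((m.choose (i+1) : ℕ) : ℝ) * b (n - (i+1)))]
        rw [Nat.choose_succ_self]
        simp only [Nat.cast_zero, mul_zero, zero_mul, add_zero]
        rw [this]
        simp
      have e3 : ∑ i ∈ Finset.range (m+1), (-1 : ℝ)^(i+1) * ((m.choose i : ℕ) : ℝ) * b (n - (i+1))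
          = - ∑ i ∈ Finset.range (m+1), (-1 : ℝ)^i * (m.choose i : ℝ) * b (n - 1 - i) := by
        rw [← Finset.sum_neg_distrib]
        refine Finset.sum_congr rfl fun i _ => ?_
        rw [show n - (i + 1) = n - 1 - i by omega]
        ring
      calc ∑ i ∈ Finset.range (m+2), (-1 : ℝ)^i * ((m+1).choose i : ℝ) * b (n - i)
          = b n + ∑ i ∈ Finset.range (m+1),
              ((-1 : ℝ)^(i+1) * ((m.choose i : ℕ) : ℝ) * b (n - (i+1))
               + (-1 : ℝ)^(i+1) * ((m.choose (i+1) : ℕ) : ℝ) * b (n - (i+1))) := by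
            rw [e1]; congr 1; exact Finset.sum_congr rfl fun i _ => by ring
        _ = b n + ((- ∑ i ∈ Finset.range (m+1), (-1 : ℝ)^i * (m.choose i : ℝ) * b (n - 1 - i))
              + ((∑ i ∈ Finset.range (m+1), (-1 : ℝ)^i * (m.choose i : ℝ) * b (n - i)) - b n)) := by
            rw [Finset.sum_add_distrib, e2, e3]
        _ = _ := by ring
    rw [hL, h1, h2]
    have hnm : n - m = (n - 1 - m) + 1 := by omega
    have hnm2 : n - (m + 1) = n - 1 - m := by omega
    rw [hnm, hnm2]
    have := aux_pascal a (n - 1 - m) m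
    rw [show n - 1 - m + 1 + 1 = n - 1 - m + 2 from rfl]
    linarith [this]

theorem stmt_0 (a b : ℕ → ℝ)
    (hb : ∀ n, b n = ∑ k ∈ Finset.range (n+1), (n.choose k : ℝ) * a k)
    (n m : ℕ) (hm : m ≤ n) :
    ∑ k ∈ Finset.range (n+1), (n.choose k : ℝ) * (k.choose m : ℝ) * a k =
      (n.choose m : ℝ) * ∑ i ∈ Finset.range (m+1), (-1 : ℝ)^i * (m.choose i : ℝ) * b (n - i) := by
  rw [key_diff a b hb m n hm, Finset.mul_sum]
  rw [Finset.range_eq_Ico, ← Finset.sum_Ico_consecutive _ (Nat.zero_le m) (by omega : m ≤ n + 1)]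
  have h0 : ∑ k ∈ Finset.Ico 0 m, (n.choose k : ℝ) * (k.choose m : ℝ) * a k = 0 := by
    apply Finset.sum_eq_zero
    intro k hk
    simp only [Finset.mem_Ico] at hk
    rw [Nat.choose_eq_zero_of_lt hk.2]
    simp
  rw [h0, zero_add, Finset.sum_Ico_eq_sum_range]
  rw [show n + 1 - m = n - m + 1 by omega]
  refine Finset.sum_congr (by rw [Finset.range_eq_Ico]) fun j hj => ?_
  simp only [Finset.mem_Ico, Finset.mem_range] at hj
  have hjm : m + j ≤ n := by omega
  have hid := Nat.choose_mul (n := n) (Nat.le_add_right m j)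
  rw [Nat.add_sub_cancel_left] at hid
  have hid' : ((n.choose (m+j) : ℕ) : ℝ) * (((m+j).choose m : ℕ) : ℝ)
      = ((n.choose m : ℕ) : ℝ) * (((n-m).choose j : ℕ) : ℝ) := by
    rw [← Nat.cast_mul, ← Nat.cast_mul, hid]
  rw [hid']
  ring
end

section
/- For all integers 0 ≤ m ≤ n and any sequence b : ℕ → ℝ, C(n,m) * ∇^m b n = ∑_{j=0}^n C(n,j) * C(j, n-m) * (-1)^{n-j} * b j, where ∇^m b n = ∑_{i=0}^m (-1)^i (m choose i) b (n-i). -/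
theorem stmt_1 (b : ℕ → ℝ) (n m : ℕ) (hm : m ≤ n) :
    (n.choose m : ℝ) * ∑ i ∈ Finset.range (m+1), (-1 : ℝ)^i * (m.choose i : ℝ) * b (n - i) =
      ∑ j ∈ Finset.range (n+1), (n.choose j : ℝ) * (j.choose (n - m) : ℝ) * (-1 : ℝ)^(n - j) * b j := by
  rw [← Finset.sum_range_reflect (fun j => (n.choose j : ℝ) * (j.choose (n - m) : ℝ) * (-1 : ℝ)^(n - j) * b j) (n+1)]
  rw [Finset.mul_sum]
  rw [← Finset.sum_subset (Finset.range_subset_range.2 (Nat.succ_le_succ hm))]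
  · apply Finset.sum_congr rfl
    intro i hi
    rw [Finset.mem_range] at hi
    have hi' : i ≤ m := Nat.lt_succ_iff.mp hi
    have hin : i ≤ n := hi'.trans hm
    have h1 : n - (n - i) = i := Nat.sub_sub_self hin
    simp only [Nat.add_sub_cancel]
    rw [h1]
    have h2 : (n - i).choose (n - m) = (n - i).choose (m - i) := by
      rw [← Nat.choose_symm (Nat.sub_le_sub_right hm i)]
      congr 1
      omega
    have h3 : (n.choose (n - i)) = n.choose i := Nat.choose_symm hin
    rw [h2, h3]
    have key : (n.choose m) * (m.choose i) = n.choose i * (n - i).choose (m - i) :=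
      Nat.choose_mul hi'
    have keyR : (n.choose m : ℝ) * (m.choose i : ℝ) =
        (n.choose i : ℝ) * ((n - i).choose (m - i) : ℝ) := by exact_mod_cast key
    linear_combination (b (n - i) * (-1:ℝ)^i) * keyR
  · intro j hj hj'
    rw [Finset.mem_range] at hj
    rw [Finset.mem_range, not_lt] at hj'
    have : (n - j).choose (n - m) = 0 := Nat.choose_eq_zero_of_lt (by omega)
    simp [this]
end

section
/- Let a, c : ℕ → ℝ, define b n = ∑_{k=0}^n C(n,k) a k and suppose c n = ∑_{k=0}^n C(n,k) d k for a sequence d. Then ∑_{k=0}^n C(n,k) * a k * c k = ∑_{m=0}^n C(n,m) * d m * ∇^m b n. -/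
open Finset

lemma key_alt (j : ℕ) : ∀ m n : ℕ, m ≤ n →
    ∑ i ∈ Finset.range (m+1), (-1:ℝ)^i * (m.choose i : ℝ) * ((n-i).choose j : ℝ) =
      if m ≤ j then (((n-m).choose (j-m) : ℕ) : ℝ) else 0 := by
  intro m
  induction m with
  | zero => intro n hn; simp
  | succ m ih =>
    intro n hn
    have hmn : m ≤ n - 1 := by omega
    have S := ih n (by omega)
    have S' := ih (n-1) hmn
    have hsum : ∑ i ∈ Finset.range (m+2), (-1:ℝ)^i * ((m+1).choose i : ℝ) * ((n-i).choose j : ℝ)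
        = (∑ i ∈ Finset.range (m+1), (-1:ℝ)^i * (m.choose i : ℝ) * ((n-i).choose j : ℝ))
          - ∑ i ∈ Finset.range (m+1), (-1:ℝ)^i * (m.choose i : ℝ) * (((n-1)-i).choose j : ℝ) := by
      rw [Finset.sum_range_succ' (fun i => (-1:ℝ)^i * ((m+1).choose i : ℝ) * ((n-i).choose j : ℝ))]
      have e1 : ∀ i ∈ Finset.range (m+1),
          (-1:ℝ)^(i+1) * ((m+1).choose (i+1) : ℝ) * ((n-(i+1)).choose j : ℝ)
          = (-1:ℝ)^(i+1) * (m.choose (i+1) : ℝ) * ((n-(i+1)).choose j : ℝ)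
            + (-((-1:ℝ)^i * (m.choose i : ℝ) * (((n-1)-i).choose j : ℝ))) := by
        intro i hi
        have : n - (i+1) = (n-1) - i := by omega
        rw [this, Nat.choose_succ_succ]
        push_cast
        ring
      rw [Finset.sum_congr rfl e1, Finset.sum_add_distrib, Finset.sum_neg_distrib]
      have e2 : ∑ i ∈ Finset.range (m+1),
          (-1:ℝ)^(i+1) * (m.choose (i+1) : ℝ) * ((n-(i+1)).choose j : ℝ)
          = (∑ i ∈ Finset.range (m+1), (-1:ℝ)^i * (m.choose i : ℝ) * ((n-i).choose j : ℝ))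
            - (-1:ℝ)^0 * (m.choose 0 : ℝ) * ((n-0).choose j : ℝ) := by
        have := Finset.sum_range_succ' (fun i => (-1:ℝ)^i * (m.choose i : ℝ) * ((n-i).choose j : ℝ)) (m+1)
        rw [Finset.sum_range_succ] at this
        simp only [Nat.choose_succ_self, Nat.cast_zero, mul_zero, zero_mul, add_zero] at this
        linarith [this]
      rw [e2]
      simp
      ring
    rw [hsum, S, S']
    by_cases h1 : m + 1 ≤ j
    · have h2 : m ≤ j := by omega
      simp only [h2, if_true, h1, if_true]
      have ha : n - m = (n - 1 - m) + 1 := by omega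
      have hb' : j - m = (j - (m+1)) + 1 := by omega
      have hc' : n - 1 - m = n - (m+1) := by omega
      rw [ha, hb', Nat.choose_succ_succ, hc']
      push_cast
      ring
    · by_cases h2 : m ≤ j
      · have hj : j = m := by omega
        simp only [h2, if_true, h1, if_false, hj]
        simp
      · simp [h1, h2]

theorem stmt_2 (a b c d : ℕ → ℝ)
    (hb : ∀ n, b n = ∑ k ∈ Finset.range (n+1), (n.choose k : ℝ) * a k)
    (hc : ∀ n, c n = ∑ k ∈ Finset.range (n+1), (n.choose k : ℝ) * d k)
    (n : ℕ) :
    ∑ k ∈ Finset.range (n+1), (n.choose k : ℝ) * a k * c k =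
      ∑ m ∈ Finset.range (n+1), (n.choose m : ℝ) * d m *
        ∑ i ∈ Finset.range (m+1), (-1 : ℝ)^i * (m.choose i : ℝ) * b (n - i) := by
  -- common value
  have lhs_eq : ∑ k ∈ Finset.range (n+1), (n.choose k : ℝ) * a k * c k
      = ∑ k ∈ Finset.range (n+1), ∑ m ∈ Finset.range (n+1),
          (n.choose k : ℝ) * ((k.choose m : ℝ) * (a k * d m)) := by
    refine Finset.sum_congr rfl fun k hk => ?_
    have hkn : k ≤ n := Nat.lt_succ_iff.mp (Finset.mem_range.mp hk)
    rw [hc k, Finset.mul_sum]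
    rw [Finset.sum_congr rfl (fun i (_ : i ∈ Finset.range (k+1)) =>
      (by ring : (n.choose k : ℝ) * a k * ((k.choose i : ℝ) * d i)
        = (n.choose k : ℝ) * ((k.choose i : ℝ) * (a k * d i))))]
    refine Finset.sum_subset (Finset.range_subset_range.mpr (by omega)) fun m _ hm' => ?_
    simp only [Finset.mem_range, not_lt] at hm'
    rw [Nat.choose_eq_zero_of_lt (show k < m by omega)]
    simp
  rw [lhs_eq, Finset.sum_comm]
  refine Finset.sum_congr rfl fun m hm => ?_
  have hmn : m ≤ n := Nat.lt_succ_iff.mp (Finset.mem_range.mp hm)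
  -- expand b on the RHS
  have inner : ∑ i ∈ Finset.range (m+1), (-1 : ℝ)^i * (m.choose i : ℝ) * b (n - i)
      = ∑ j ∈ Finset.range (n+1),
          (∑ i ∈ Finset.range (m+1), (-1:ℝ)^i * (m.choose i : ℝ) * ((n-i).choose j : ℝ)) * a j := by
    have step : ∀ i ∈ Finset.range (m+1),
        (-1 : ℝ)^i * (m.choose i : ℝ) * b (n - i)
        = ∑ j ∈ Finset.range (n+1), (-1:ℝ)^i * (m.choose i : ℝ) * (((n-i).choose j : ℝ) * a j) := by
      intro i hi
      have hin : i ≤ m := Nat.lt_succ_iff.mp (Finset.mem_range.mp hi)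
      rw [hb (n - i), Finset.mul_sum]
      refine Finset.sum_subset (Finset.range_subset_range.mpr (by omega)) fun x _ hx' => ?_
      simp only [Finset.mem_range, not_lt] at hx'
      rw [Nat.choose_eq_zero_of_lt (show n - i < x by omega)]
      simp
    rw [Finset.sum_congr rfl step, Finset.sum_comm]
    refine Finset.sum_congr rfl fun j hj => ?_
    rw [Finset.sum_mul]
    refine Finset.sum_congr rfl fun i hi => ?_
    ring
  rw [inner, Finset.mul_sum]
  refine Finset.sum_congr rfl fun j hj => ?_
  have hjn : j ≤ n := Nat.lt_succ_iff.mp (Finset.mem_range.mp hj)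
  rw [key_alt j m n hmn]
  by_cases h : m ≤ j
  · simp only [h, if_true]
    have := Nat.choose_mul (n := n) h
    have cast_eq : (n.choose m : ℝ) * ((n-m).choose (j-m) : ℝ) = (n.choose j : ℝ) * (j.choose m : ℝ) := by
      have : (n.choose j * j.choose m : ℕ) = (n.choose m * (n - m).choose (j - m) : ℕ) := Nat.choose_mul (n := n) h
      exact_mod_cast (congrArg (fun x : ℕ => (x : ℝ)) this).symm
    calc (n.choose j : ℝ) * ((j.choose m : ℝ) * (a j * d m))
        = ((n.choose j : ℝ) * (j.choose m : ℝ)) * (a j * d m) := by ring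
      _ = ((n.choose m : ℝ) * ((n-m).choose (j-m) : ℝ)) * (a j * d m) := by rw [cast_eq]
      _ = (n.choose m : ℝ) * d m * (((n-m).choose (j-m) : ℝ) * a j) := by ring
  · simp only [h, if_false]
    rw [Nat.choose_eq_zero_of_lt (by omega : j < m)]
    simp
end

section
/- For any sequence a : ℕ → ℝ with binomial transform b n = ∑_{k=0}^n C(n,k) a k, and any real x, ∑_{k=0}^n C(n,k) * a k * x^k = ∑_{j=0}^n C(n,j) * b j * x^j * (1-x)^{n-j}. -/
open Finset in
lemma key_4 (n k : ℕ) (hk : k ≤ n) (x : ℝ) :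
    ∑ j ∈ Finset.Icc k n, (n.choose j : ℝ) * (j.choose k : ℝ) * x ^ j * (1 - x) ^ (n - j)
      = (n.choose k : ℝ) * x ^ k := by
  have h1 : ∀ j ∈ Finset.Icc k n,
      (n.choose j : ℝ) * (j.choose k : ℝ) * x ^ j * (1 - x) ^ (n - j)
        = (n.choose k : ℝ) * x ^ k * ((x ^ (j - k) * (1 - x) ^ (n - k - (j - k)) * ((n-k).choose (j-k) : ℝ))) := by
    intro j hj
    rw [Finset.mem_Icc] at hj
    have := Nat.choose_mul (n := n) hj.1
    have hcast : (n.choose j : ℝ) * (j.choose k : ℝ) = (n.choose k : ℝ) * ((n-k).choose (j-k) : ℝ) := by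
      exact_mod_cast congrArg (Nat.cast (R := ℝ)) this
    have hx : x ^ j = x ^ k * x ^ (j - k) := by
      rw [← pow_add]; congr 1; omega
    have hn : n - j = n - k - (j - k) := by omega
    rw [hcast, hx, hn]; ring
  rw [Finset.sum_congr rfl h1, ← Finset.mul_sum]
  have h2 : ∑ j ∈ Finset.Icc k n,
      x ^ (j - k) * (1 - x) ^ (n - k - (j - k)) * ((n-k).choose (j-k) : ℝ)
      = ∑ i ∈ Finset.range (n - k + 1), x ^ i * (1 - x) ^ (n - k - i) * ((n-k).choose i : ℝ) := by
    refine Finset.sum_nbij' (fun j => j - k) (fun i => i + k) ?_ ?_ ?_ ?_ ?_ <;>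
      simp only [Finset.mem_Icc, Finset.mem_range] <;> intros <;> first | omega | trivial
  rw [h2, ← add_pow]
  simp

theorem stmt_4 (a b : ℕ → ℝ)
    (hb : ∀ n, b n = ∑ k ∈ Finset.range (n+1), (n.choose k : ℝ) * a k)
    (n : ℕ) (x : ℝ) :
    ∑ k ∈ Finset.range (n+1), (n.choose k : ℝ) * a k * x^k =
      ∑ j ∈ Finset.range (n+1), (n.choose j : ℝ) * b j * x^j * (1 - x)^(n - j) := by
  have : ∀ j, (n.choose j : ℝ) * b j * x^j * (1 - x)^(n - j)
      = ∑ k ∈ Finset.range (j+1),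
          ((n.choose j : ℝ) * (j.choose k : ℝ) * x ^ j * (1 - x) ^ (n - j)) * a k := by
    intro j
    rw [hb, Finset.mul_sum, Finset.sum_mul, Finset.sum_mul]
    exact Finset.sum_congr rfl fun k _ => by ring
  simp only [this]
  have hswap := Finset.sum_Ico_Ico_comm 0 (n+1)
    (fun k j => ((n.choose j : ℝ) * (j.choose k : ℝ) * x ^ j * (1 - x) ^ (n - j)) * a k)
  simp only [← Finset.range_eq_Ico] at hswap
  rw [← hswap]
  refine Finset.sum_congr rfl fun k hk => ?_
  rw [Finset.mem_range] at hk
  have : Finset.Ico k (n+1) = Finset.Icc k n := by rw [Finset.Ico_add_one_right_eq_Icc]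
  rw [this, ← Finset.sum_mul, key_4 n k (by omega) x]; ring
end

section
/- For any sequence a : ℕ → ℝ with binomial transform b n = ∑_{k=0}^n C(n,k) a k, and any real x, ∑_{k=0}^n C(n,k) * a k * x^k = ∑_{m=0}^n C(n,m) * (∇^m b n) * (x-1)^m. -/
open Finset

lemma lem1 (m : ℕ) : ∀ N k : ℕ,
    ∑ i ∈ range (m+1), (-1:ℝ)^i * (m.choose i : ℝ) * ((N + m - i).choose k : ℝ)
      = if m ≤ k then ((N.choose (k - m) : ℕ) : ℝ) else 0 := by
  induction m with
  | zero =>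
      intro N k
      simp
  | succ m ih =>
      intro N k
      have key : ∑ i ∈ range (m+1+1), (-1:ℝ)^i * ((m+1).choose i : ℝ) * ((N + (m+1) - i).choose k : ℝ)
          = (∑ i ∈ range (m+1), (-1:ℝ)^i * (m.choose i : ℝ) * (((N+1) + m - i).choose k : ℝ))
            - (∑ i ∈ range (m+1), (-1:ℝ)^i * (m.choose i : ℝ) * ((N + m - i).choose k : ℝ)) := by
        have hsub : ∀ i, i ≤ m → ((N + (m+1) - (i+1) : ℕ)) = N + m - i := by omega
        have hsub2 : ∀ i, i ≤ m → ((N + 1 + m - (i+1) : ℕ)) = N + m - i := by omega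
        have hterm : ∀ i ∈ range (m+1),
            (-1:ℝ)^(i+1) * (((m+1).choose (i+1) : ℕ) : ℝ) * ((N + (m+1) - (i+1)).choose k : ℝ)
            = (-1:ℝ)^(i+1) * ((m.choose (i+1) : ℕ) : ℝ) * (((N+1) + m - (i+1)).choose k : ℝ)
              - (-1:ℝ)^i * ((m.choose i : ℕ) : ℝ) * ((N + m - i).choose k : ℝ) := by
          intro i hi
          have hi' : i ≤ m := by simpa [Nat.lt_succ_iff] using hi
          rw [hsub i hi', hsub2 i hi', Nat.choose_succ_succ]
          push_cast
          ring
        rw [Finset.sum_range_succ' _ (m+1), Finset.sum_congr rfl hterm, Finset.sum_sub_distrib]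
        rw [Finset.sum_range_succ (fun i => (-1:ℝ)^(i+1) * ((m.choose (i+1) : ℕ) : ℝ) * (((N+1) + m - (i+1)).choose k : ℝ)) m]
        rw [Finset.sum_range_succ' (fun i => (-1:ℝ)^i * ((m.choose i : ℕ) : ℝ) * (((N+1) + m - i).choose k : ℝ)) m]
        have hlast : ((m.choose (m+1) : ℕ) : ℝ) = 0 := by
          simp [Nat.choose_eq_zero_of_lt]
        have h0 : (N + (m+1) - 0 : ℕ) = (N+1) + m - 0 := by omega
        rw [hlast, h0]
        simp [Nat.choose_zero_right]
        ring
      rw [key, ih (N+1) k, ih N k]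
      by_cases h1 : m + 1 ≤ k
      · have h2 : m ≤ k := by omega
        rw [if_pos h1, if_pos h2, if_pos h2]
        have hk : k - m = (k - (m+1)) + 1 := by omega
        rw [hk, Nat.choose_succ_succ]
        push_cast
        ring
      · rw [if_neg h1]
        by_cases h2 : m ≤ k
        · have hk : k = m := by omega
          rw [if_pos h2, if_pos h2, hk]
          simp
        · rw [if_neg h2, if_neg h2]
          ring

theorem stmt_8 (a b : ℕ → ℝ)
    (hb : ∀ n, b n = ∑ k ∈ Finset.range (n+1), (n.choose k : ℝ) * a k)
    (n : ℕ) (x : ℝ) :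
    ∑ k ∈ Finset.range (n+1), (n.choose k : ℝ) * a k * x^k =
      ∑ m ∈ Finset.range (n+1), (n.choose m : ℝ) *
        (∑ i ∈ Finset.range (m+1), (-1 : ℝ)^i * (m.choose i : ℝ) * b (n - i)) * (x - 1)^m := by
  -- Step 1: compute the inner difference sum
  have step1 : ∀ m ∈ range (n+1),
      ∑ i ∈ range (m+1), (-1:ℝ)^i * (m.choose i : ℝ) * b (n - i)
        = ∑ j ∈ range (n+1), (if m ≤ j then (((n-m).choose (j-m) : ℕ) : ℝ) else 0) * a j := by
    intro m hm
    have hmn : m ≤ n := by simpa [Nat.lt_succ_iff] using hm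
    have hbext : ∀ i ∈ range (m+1),
        b (n - i) = ∑ j ∈ range (n+1), (((n-i).choose j : ℕ) : ℝ) * a j := by
      intro i hi
      have hin : i ≤ m := by simpa [Nat.lt_succ_iff] using hi
      rw [hb (n - i)]
      apply Finset.sum_subset
      · apply Finset.range_subset_range.2; omega
      · intro j _ hj
        have : n - i < j := by
          simp only [Finset.mem_range, Nat.lt_succ_iff, not_le] at hj
          omega
        simp [Nat.choose_eq_zero_of_lt this]
    calc ∑ i ∈ range (m+1), (-1:ℝ)^i * (m.choose i : ℝ) * b (n - i)
        = ∑ i ∈ range (m+1), ∑ j ∈ range (n+1),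
            (-1:ℝ)^i * (m.choose i : ℝ) * (((n-i).choose j : ℕ) : ℝ) * a j := by
          refine Finset.sum_congr rfl fun i hi => ?_
          rw [hbext i hi, Finset.mul_sum]
          exact Finset.sum_congr rfl fun j _ => by ring
      _ = ∑ j ∈ range (n+1), ∑ i ∈ range (m+1),
            (-1:ℝ)^i * (m.choose i : ℝ) * (((n-i).choose j : ℕ) : ℝ) * a j := Finset.sum_comm
      _ = ∑ j ∈ range (n+1), (if m ≤ j then (((n-m).choose (j-m) : ℕ) : ℝ) else 0) * a j := by
          refine Finset.sum_congr rfl fun j _ => ?_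
          rw [← Finset.sum_mul]
          congr 1
          have hNi : ∀ i ∈ range (m+1),
              (-1:ℝ)^i * (m.choose i : ℝ) * (((n-i).choose j : ℕ) : ℝ)
              = (-1:ℝ)^i * (m.choose i : ℝ) * ((((n-m) + m - i).choose j : ℕ) : ℝ) := by
            intro i hi
            have : i ≤ m := by simpa [Nat.lt_succ_iff] using hi
            have h : (n - i : ℕ) = (n - m) + m - i := by omega
            rw [h]
          rw [Finset.sum_congr rfl hNi]
          exact lem1 m (n - m) j
  symm
  calc ∑ m ∈ range (n+1), (n.choose m : ℝ) *
          (∑ i ∈ range (m+1), (-1:ℝ)^i * (m.choose i : ℝ) * b (n - i)) * (x-1)^m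
      = ∑ m ∈ range (n+1), ∑ j ∈ range (n+1),
          (n.choose m : ℝ) * (if m ≤ j then (((n-m).choose (j-m) : ℕ) : ℝ) else 0) * a j * (x-1)^m := by
        refine Finset.sum_congr rfl fun m hm => ?_
        rw [step1 m hm, Finset.mul_sum, Finset.sum_mul]
        exact Finset.sum_congr rfl fun j _ => by ring
    _ = ∑ j ∈ range (n+1), ∑ m ∈ range (n+1),
          (n.choose m : ℝ) * (if m ≤ j then (((n-m).choose (j-m) : ℕ) : ℝ) else 0) * a j * (x-1)^m := Finset.sum_comm
    _ = ∑ j ∈ range (n+1), (n.choose j : ℝ) * a j * x^j := by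
        refine Finset.sum_congr rfl fun j hj => ?_
        have hjn : j ≤ n := by simpa [Nat.lt_succ_iff] using hj
        have inner : ∑ m ∈ range (n+1),
            (n.choose m : ℝ) * (if m ≤ j then (((n-m).choose (j-m) : ℕ) : ℝ) else 0) * a j * (x-1)^m
            = ∑ m ∈ range (j+1), (n.choose j : ℝ) * (j.choose m : ℝ) * a j * (x-1)^m := by
          rw [← Finset.sum_subset (Finset.range_subset_range.2 (by omega : j + 1 ≤ n + 1))
              (fun m _ hm => ?_)]
          · refine Finset.sum_congr rfl fun m hm => ?_
            have hmj : m ≤ j := by simpa [Nat.lt_succ_iff] using hm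
            rw [if_pos hmj]
            have hmul := Nat.choose_mul (n := n) (k := j) (s := m) hmj
            have hcast : (n.choose m : ℝ) * (((n-m).choose (j-m) : ℕ) : ℝ)
                = (n.choose j : ℝ) * (j.choose m : ℝ) := by
              rw [← Nat.cast_mul, ← Nat.cast_mul, ← hmul]
            calc (n.choose m : ℝ) * (((n-m).choose (j-m) : ℕ) : ℝ) * a j * (x-1)^m
                = ((n.choose m : ℝ) * (((n-m).choose (j-m) : ℕ) : ℝ)) * (a j * (x-1)^m) := by ring
              _ = ((n.choose j : ℝ) * (j.choose m : ℝ)) * (a j * (x-1)^m) := by rw [hcast]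
              _ = (n.choose j : ℝ) * (j.choose m : ℝ) * a j * (x-1)^m := by ring
          · have hmj : ¬ m ≤ j := by
              simp only [Finset.mem_range, Nat.lt_succ_iff, not_le] at hm
              omega
            rw [if_neg hmj]
            ring
        rw [inner]
        have hxj : x ^ j = ∑ m ∈ range (j+1), (j.choose m : ℝ) * (x-1)^m := by
          have h := add_pow (x - 1) 1 j
          simp only [one_pow, mul_one] at h
          rw [show x = (x - 1) + 1 by ring, h]
          exact Finset.sum_congr rfl fun m _ => by ring
        rw [hxj, Finset.mul_sum]
        exact Finset.sum_congr rfl fun m _ => by ring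
end

section
/- For any sequence b : ℕ → ℝ and n ≥ 0, ∑_{m=0}^n C(n,m) * ∇^m b n = ∑_{j=0}^n C(n,j) * (-1)^{n-j} * 2^j * b j, where ∇^m b n = ∑_{i=0}^m (-1)^i (m choose i) b (n-i). -/
theorem stmt_9 (b : ℕ → ℝ) (n : ℕ) :
    ∑ m ∈ Finset.range (n+1), (n.choose m : ℝ) *
        ∑ i ∈ Finset.range (m+1), (-1 : ℝ)^i * (m.choose i : ℝ) * b (n - i) =
      ∑ j ∈ Finset.range (n+1), (n.choose j : ℝ) * (-1 : ℝ)^(n - j) * 2^j * b j := by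
  have key : ∀ i, i ≤ n → ∑ m ∈ Finset.Ico i (n+1), (n.choose m) * (m.choose i)
      = (n.choose i) * 2^(n-i) := by
    intro i hi
    calc ∑ m ∈ Finset.Ico i (n+1), n.choose m * m.choose i
        = ∑ m ∈ Finset.Ico i (n+1), n.choose i * (n-i).choose (m-i) := by
          refine Finset.sum_congr rfl ?_
          intro m hm
          simp only [Finset.mem_Ico] at hm
          exact Nat.choose_mul hm.1
      _ = ∑ k ∈ Finset.range (n-i+1), n.choose i * (n-i).choose k := by
          rw [Finset.sum_Ico_eq_sum_range]
          have h : n + 1 - i = n - i + 1 := by omega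
          rw [h]
          exact Finset.sum_congr rfl (fun k _ => by rw [Nat.add_sub_cancel_left])
      _ = n.choose i * 2^(n-i) := by rw [← Finset.mul_sum, Nat.sum_range_choose]
  have h1 : ∑ m ∈ Finset.range (n+1), (n.choose m : ℝ) *
        ∑ i ∈ Finset.range (m+1), (-1 : ℝ)^i * (m.choose i : ℝ) * b (n - i) =
      ∑ i ∈ Finset.range (n+1), (-1:ℝ)^i * b (n-i) *
        ∑ m ∈ Finset.Ico i (n+1), (n.choose m : ℝ) * (m.choose i : ℝ) := by
    calc ∑ m ∈ Finset.range (n+1), (n.choose m : ℝ) *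
          ∑ i ∈ Finset.range (m+1), (-1 : ℝ)^i * (m.choose i : ℝ) * b (n - i)
        = ∑ m ∈ Finset.Ico 0 (n+1), ∑ i ∈ Finset.Ico 0 (m+1),
            (-1:ℝ)^i * b (n-i) * ((n.choose m : ℝ) * (m.choose i : ℝ)) := by
          simp only [Nat.Ico_zero_eq_range]
          refine Finset.sum_congr rfl fun m _ => ?_
          rw [Finset.mul_sum]
          exact Finset.sum_congr rfl fun i _ => by ring
      _ = ∑ i ∈ Finset.Ico 0 (n+1), ∑ m ∈ Finset.Ico i (n+1),
            (-1:ℝ)^i * b (n-i) * ((n.choose m : ℝ) * (m.choose i : ℝ)) :=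
          (Finset.sum_Ico_Ico_comm 0 (n+1)
            (fun i m => (-1:ℝ)^i * b (n-i) * ((n.choose m : ℝ) * (m.choose i : ℝ)))).symm
      _ = ∑ i ∈ Finset.Ico 0 (n+1), (-1:ℝ)^i * b (n-i) *
            ∑ m ∈ Finset.Ico i (n+1), (n.choose m : ℝ) * (m.choose i : ℝ) := by
          exact Finset.sum_congr rfl fun i _ => by rw [Finset.mul_sum]
      _ = ∑ i ∈ Finset.range (n+1), (-1:ℝ)^i * b (n-i) *
            ∑ m ∈ Finset.Ico i (n+1), (n.choose m : ℝ) * (m.choose i : ℝ) := by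
          rw [Nat.Ico_zero_eq_range]
  rw [h1]
  rw [← Finset.sum_range_reflect
    (fun j => (n.choose j : ℝ) * (-1 : ℝ)^(n - j) * 2^j * b j) (n+1)]
  refine Finset.sum_congr rfl fun i hi => ?_
  simp only [Finset.mem_range] at hi
  have hi' : i ≤ n := by omega
  have h2 : n + 1 - 1 - i = n - i := by omega
  rw [h2]
  have := key i hi'
  have hcast : (∑ m ∈ Finset.Ico i (n+1), (n.choose m : ℝ) * (m.choose i : ℝ))
      = (n.choose i : ℝ) * 2^(n-i) := by exact_mod_cast this
  rw [hcast, Nat.choose_symm hi']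
  have h3 : n - (n - i) = i := by omega
  rw [h3]
  ring
end

section
/- For all integers 1 ≤ m ≤ n, ∑_{k=m}^n C(n,k) * C(k,m) * (-1)^k / k = (-1)^m / m. -/
open Finset

private lemma alt_real (d : ℕ) (hd : d ≠ 0) :
    ∑ i ∈ range (d + 1), (-1 : ℝ) ^ i * d.choose i = 0 := by
  have h := Int.alternating_sum_range_choose_of_ne hd
  have h2 : ((∑ i ∈ range (d + 1), (-1 : ℤ) ^ i * d.choose i : ℤ) : ℝ) = 0 := by
    rw [h]; norm_num
  rw [← h2]
  push_cast
  ring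

private lemma lemA (r n : ℕ) (h : r < n) :
    ∑ j ∈ Icc r n, (-1 : ℝ) ^ j * n.choose j * j.choose r = 0 := by
  obtain ⟨d, rfl⟩ : ∃ d, n = r + d := ⟨n - r, by omega⟩
  have hd : d ≠ 0 := by omega
  have hIcc : Icc r (r + d) = (Icc 0 d).map (addRightEmbedding r) := by
    rw [Finset.map_add_right_Icc]; congr 1 <;> omega
  rw [hIcc, Finset.sum_map]
  have key : ∀ i ∈ Icc 0 d,
      (-1 : ℝ) ^ (addRightEmbedding r i) * (r + d).choose (addRightEmbedding r i) *
        ((addRightEmbedding r i) : ℕ).choose r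
      = ((-1 : ℝ) ^ r * (r + d).choose r) * ((-1 : ℝ) ^ i * d.choose i) := by
    intro i hi
    simp only [addRightEmbedding_apply]
    have hi' : i ≤ d := by simpa using hi
    have h1 : (r + d).choose (i + r) * (i + r).choose r
        = (r + d).choose r * ((r + d) - r).choose ((i + r) - r) :=
      Nat.choose_mul (by omega)
    have h2 : (r + d) - r = d := by omega
    have h3 : (i + r) - r = i := by omega
    rw [h2, h3] at h1
    have hc : ((r + d).choose (i + r) : ℝ) * (i + r).choose r
        = ((r + d).choose r : ℝ) * d.choose i := by exact_mod_cast h1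
    linear_combination ((-1 : ℝ) ^ (i + r)) * hc
  rw [Finset.sum_congr rfl key, ← Finset.mul_sum]
  have hr : Icc 0 d = range (d + 1) := by
    rw [Finset.range_eq_Ico, Finset.Ico_add_one_right_eq_Icc]
  rw [hr, alt_real d hd, mul_zero]

private lemma lemB (s t : ℕ) (hst : s ≤ t) :
    ∑ j ∈ Icc s t, (-1 : ℝ) ^ j * (t + 1).choose (j + 1) * j.choose s = (-1) ^ s := by
  induction t, hst using Nat.le_induction with
  | base => simp
  | succ t hst ih =>
    have hsplit : ∀ j ∈ Icc s (t + 1),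
        (-1 : ℝ) ^ j * (t + 1 + 1).choose (j + 1) * j.choose s
          = (-1 : ℝ) ^ j * (t + 1).choose j * j.choose s
            + (-1 : ℝ) ^ j * (t + 1).choose (j + 1) * j.choose s := by
      intro j hj
      rw [Nat.choose_succ_succ]
      push_cast
      ring
    rw [Finset.sum_congr rfl hsplit, Finset.sum_add_distrib,
      lemA s (t + 1) (by omega), Finset.sum_Icc_succ_top (by omega : s ≤ t + 1), ih,
      Nat.choose_eq_zero_of_lt (by omega)]
    push_cast
    ring

theorem stmt_10 (n m : ℕ) (h1 : 1 ≤ m) (hmn : m ≤ n) :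
    ∑ k ∈ Finset.Icc m n, (n.choose k : ℝ) * (k.choose m : ℝ) * (-1 : ℝ)^k / k =
      (-1 : ℝ)^m / m := by
  obtain ⟨s, rfl⟩ : ∃ s, m = s + 1 := ⟨m - 1, by omega⟩
  obtain ⟨t, rfl⟩ : ∃ t, n = t + 1 := ⟨n - 1, by omega⟩
  have hst : s ≤ t := by omega
  have hIcc : Icc (s + 1) (t + 1) = (Icc s t).map (addRightEmbedding 1) := by
    rw [Finset.map_add_right_Icc]
  rw [hIcc, Finset.sum_map]
  have key : ∀ j ∈ Icc s t,
      ((t + 1).choose (addRightEmbedding 1 j) : ℝ) *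
        (((addRightEmbedding 1 j) : ℕ).choose (s + 1) : ℝ) * (-1 : ℝ) ^ (addRightEmbedding 1 j)
          / ((addRightEmbedding 1 j) : ℕ)
      = (-((-1 : ℝ) ^ j * (t + 1).choose (j + 1) * j.choose s)) / (s + 1) := by
    intro j hj
    simp only [addRightEmbedding_apply]
    have h1 : (j + 1) * j.choose s = (j + 1).choose (s + 1) * (s + 1) :=
      Nat.add_one_mul_choose_eq j s
    have hc : ((j : ℝ) + 1) * j.choose s = ((j + 1).choose (s + 1) : ℝ) * ((s : ℝ) + 1) := by
      exact_mod_cast h1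
    have hj1 : ((j : ℝ) + 1) ≠ 0 := by positivity
    have hs1 : ((s : ℝ) + 1) ≠ 0 := by positivity
    push_cast
    field_simp
    linear_combination ((-1 : ℝ) ^ j * ((t + 1).choose (j + 1) : ℝ)) * hc
  rw [Finset.sum_congr rfl key, ← Finset.sum_div, Finset.sum_neg_distrib, lemB s t hst]
  push_cast
  ring
end

section
/- For all integers 1 ≤ m ≤ n, C(n,m) * ∇^m H n = (-1)^{m-1} / m, where H n = ∑_{j=1}^n 1/j is the n-th harmonic number and ∇^m H n = ∑_{i=0}^m (-1)^i (m choose i) H (n-i). -/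
lemma sum_rec11 (H : ℕ → ℚ) (k n : ℕ) :
    (∑ i ∈ Finset.range (k+2), (-1:ℚ)^i * ((k+1).choose i) * H (n - i))
      = (∑ i ∈ Finset.range (k+1), (-1:ℚ)^i * (k.choose i) * H (n - i))
        - ∑ i ∈ Finset.range (k+1), (-1:ℚ)^i * (k.choose i) * H (n - 1 - i) := by
  rw [Finset.sum_range_succ' _ (k+1),
      Finset.sum_range_succ' (fun i => (-1:ℚ)^i * (k.choose i) * H (n - i)) k]
  have hsplit : ∀ j, (-1:ℚ)^(j+1) * (((k+1).choose (j+1) : ℕ) : ℚ) * H (n - (j+1))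
      = (-1:ℚ)^(j+1) * (k.choose (j+1) : ℚ) * H (n - (j+1))
        - (-1:ℚ)^j * (k.choose j : ℚ) * H (n - 1 - j) := by
    intro j
    rw [Nat.choose_succ_succ]
    have : n - (j+1) = n - 1 - j := by omega
    rw [this]
    push_cast
    ring
  rw [Finset.sum_congr rfl (fun j _ => hsplit j), Finset.sum_sub_distrib]
  rw [Finset.sum_range_succ (fun j => (-1:ℚ)^(j+1) * (k.choose (j+1) : ℚ) * H (n - (j+1))) k]
  simp [Nat.choose_succ_self]
  ring

lemma key11 (H : ℕ → ℚ) (hH : ∀ n, H n = ∑ j ∈ Finset.range n, (1 : ℚ) / (j + 1)) :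
    ∀ m, 1 ≤ m → ∀ n, m ≤ n →
    (n.factorial : ℚ) * ∑ i ∈ Finset.range (m+1), (-1:ℚ)^i * (m.choose i) * H (n - i)
      = (-1:ℚ)^(m-1) * ((m-1).factorial : ℚ) * ((n-m).factorial : ℚ) := by
  intro m
  induction m with
  | zero => omega
  | succ k ih =>
    intro _ n hn
    rcases Nat.eq_zero_or_pos k with rfl | hk
    · -- base case m = 1
      obtain ⟨n', rfl⟩ : ∃ n', n = n' + 1 := ⟨n - 1, by omega⟩
      simp [Finset.sum_range_succ, hH, Nat.factorial_succ]
      have : ((n':ℚ)+1) ≠ 0 := by positivity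
      field_simp
    · have hrec := sum_rec11 H k n
      rw [show k + 1 + 1 = k + 2 from rfl, hrec]
      have h1 := ih hk n (by omega)
      have h2 := ih hk (n-1) (by omega)
      have e1 : n - 1 - k = n - (k+1) := by omega
      rw [e1] at h2
      have hfn : (n.factorial : ℚ) = n * ((n-1).factorial : ℚ) := by
        obtain ⟨n', rfl⟩ : ∃ n', n = n' + 1 := ⟨n - 1, by omega⟩
        simp [Nat.factorial_succ]
      have hfk : (((k+1).factorial : ℕ) : ℚ) = (k+1) * (k.factorial : ℚ) := by
        simp [Nat.factorial_succ]
      have hfnk : ((n-k).factorial : ℚ) = ((n-k : ℕ) : ℚ) * ((n-(k+1)).factorial : ℚ) := by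
        have : n - k = (n - (k+1)) + 1 := by omega
        rw [this, Nat.factorial_succ]
        push_cast
        rfl
      have hsign : (-1:ℚ)^(k+1-1) = (-1:ℚ)^k := by congr 1
      have hsign2 : (-1:ℚ)^k = -(-1:ℚ)^(k-1) := by
        obtain ⟨k', rfl⟩ : ∃ k', k = k' + 1 := ⟨k - 1, by omega⟩
        simp [pow_succ]
      have hcast : ((n-k : ℕ) : ℚ) = (n:ℚ) - (k:ℚ) := by
        push_cast [Nat.cast_sub (by omega : k ≤ n)]; ring
      rw [mul_sub, h1, hfn, mul_assoc (n:ℚ) _ _, h2, hsign, hsign2, hfnk, hcast]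
      have hred : ((k+1-1).factorial : ℚ) = (k.factorial : ℚ) := by norm_num
      rw [hred]
      have hfkk : (k.factorial : ℚ) = k * ((k-1).factorial : ℚ) := by
        obtain ⟨k', rfl⟩ : ∃ k', k = k' + 1 := ⟨k - 1, by omega⟩
        simp [Nat.factorial_succ]
      rw [hfkk]
      ring

theorem stmt_11 (H : ℕ → ℚ) (hH : ∀ n, H n = ∑ j ∈ Finset.range n, (1 : ℚ) / (j + 1))
    (n m : ℕ) (h1 : 1 ≤ m) (hmn : m ≤ n) :
    (n.choose m : ℚ) * ∑ i ∈ Finset.range (m+1), (-1 : ℚ)^i * (m.choose i : ℚ) * H (n - i) =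
      (-1 : ℚ)^(m - 1) / m := by
  have hfac := key11 H hH m h1 n hmn
  have hchoose : ((n.choose m : ℕ) : ℚ) * (m.factorial : ℚ) * ((n-m).factorial : ℚ)
      = (n.factorial : ℚ) := by
    have := Nat.choose_mul_factorial_mul_factorial hmn
    exact_mod_cast congrArg (Nat.cast : ℕ → ℚ) this
  have hm0 : (m:ℚ) ≠ 0 := by positivity
  have hn0 : (n.factorial : ℚ) ≠ 0 := by positivity
  rw [eq_div_iff hm0]
  have hmf : (m:ℚ) * (((m-1).factorial : ℕ) : ℚ) = (m.factorial : ℚ) := by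
    obtain ⟨m', rfl⟩ : ∃ m', m = m' + 1 := ⟨m - 1, by omega⟩
    simp [Nat.factorial_succ]
  refine mul_left_cancel₀ hn0 ?_
  calc (n.factorial:ℚ) * ((n.choose m : ℚ) * (∑ i ∈ Finset.range (m+1), (-1 : ℚ)^i * (m.choose i : ℚ) * H (n - i)) * m)
      = ((n.choose m : ℚ) * ((m:ℚ) * ((m-1).factorial : ℚ))) * ((n.factorial:ℚ) * ∑ i ∈ Finset.range (m+1), (-1 : ℚ)^i * (m.choose i : ℚ) * H (n - i)) / ((m-1).factorial : ℚ) := by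
        field_simp
    _ = ((n.choose m : ℚ) * (m.factorial : ℚ)) * ((-1:ℚ)^(m-1) * ((m-1).factorial : ℚ) * ((n-m).factorial : ℚ)) / ((m-1).factorial : ℚ) := by rw [hmf, hfac]
    _ = (-1:ℚ)^(m-1) * ((n.choose m : ℚ) * (m.factorial : ℚ) * ((n-m).factorial : ℚ)) := by
        have : (((m-1).factorial : ℕ) : ℚ) ≠ 0 := by positivity
        field_simp
    _ = (n.factorial : ℚ) * (-1:ℚ)^(m-1) := by rw [hchoose]; ring
end

section
/- For all n ≥ 1 and real x, ∑_{k=1}^n C(n,k) * (-1)^{k-1} * x^k / k = H n - ∑_{k=1}^n (1-x)^k / k, where H n is the n-th harmonic number. -/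
open Finset

lemma key_binom (m : ℕ) (x : ℝ) :
    ∑ k ∈ Finset.range m, (m.choose (k+1) : ℝ) * (-1 : ℝ)^k * x^(k+1) = 1 - (1-x)^m := by
  have h : (1 - x) ^ m = ∑ k ∈ Finset.range (m+1), (-x)^k * 1^(m-k) * (m.choose k : ℝ) := by
    rw [show (1:ℝ) - x = -x + 1 by ring]
    exact add_pow (-x) 1 m
  rw [h, Finset.sum_range_succ']
  simp only [one_pow, mul_one, pow_zero, Nat.choose_zero_right, Nat.cast_one, one_mul]
  have h2 : ∀ k ∈ Finset.range m, (-x)^(k+1) * (m.choose (k+1) : ℝ) =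
      -((m.choose (k+1) : ℝ) * (-1:ℝ)^k * x^(k+1)) := by
    intro k _
    rw [neg_pow]
    ring
  rw [Finset.sum_congr rfl h2, Finset.sum_neg_distrib]
  ring

lemma main_ind (x : ℝ) (n : ℕ) :
    ∑ k ∈ Finset.range n, (n.choose (k+1) : ℝ) * (-1 : ℝ)^k * x^(k+1) / (k+1) =
      ∑ k ∈ Finset.range n, ((1:ℝ)/(k+1) - (1-x)^(k+1)/(k+1)) := by
  induction n with
  | zero => simp
  | succ n ih =>
    have hsplit : ∀ k ∈ Finset.range (n+1),
        ((n+1).choose (k+1) : ℝ) * (-1 : ℝ)^k * x^(k+1) / (k+1) =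
        (n.choose (k+1) : ℝ) * (-1 : ℝ)^k * x^(k+1) / (k+1)
        + (n.choose k : ℝ) * (-1 : ℝ)^k * x^(k+1) / (k+1) := by
      intro k _
      rw [Nat.choose_succ_succ]
      push_cast
      ring
    rw [Finset.sum_congr rfl hsplit, Finset.sum_add_distrib]
    have h1 : ∑ k ∈ Finset.range (n+1), (n.choose (k+1) : ℝ) * (-1 : ℝ)^k * x^(k+1) / (k+1)
        = ∑ k ∈ Finset.range n, (n.choose (k+1) : ℝ) * (-1 : ℝ)^k * x^(k+1) / (k+1) := by
      rw [Finset.sum_range_succ, Nat.choose_succ_self]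
      simp
    have h2 : ∑ k ∈ Finset.range (n+1), (n.choose k : ℝ) * (-1 : ℝ)^k * x^(k+1) / (k+1)
        = (1 - (1-x)^(n+1)) / (n+1) := by
      have hc : ∀ k ∈ Finset.range (n+1),
          (n.choose k : ℝ) * (-1 : ℝ)^k * x^(k+1) / (k+1) =
          ((n+1).choose (k+1) : ℝ) * (-1 : ℝ)^k * x^(k+1) / (n+1) := by
        intro k _
        have h := Nat.add_one_mul_choose_eq n k
        have h' : ((n:ℝ)+1) * (n.choose k : ℝ) = ((n+1).choose (k+1) : ℝ) * ((k:ℝ)+1) := by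
          exact_mod_cast congrArg (Nat.cast : ℕ → ℝ) h
        have hk : ((k:ℝ)+1) ≠ 0 := by positivity
        have hn : ((n:ℝ)+1) ≠ 0 := by positivity
        rw [div_eq_div_iff hk hn]
        linear_combination (-1:ℝ)^k * x^(k+1) * h'
      rw [Finset.sum_congr rfl hc]
      rw [← Finset.sum_div]
      rw [show ∑ k ∈ Finset.range (n+1), ((n+1).choose (k+1) : ℝ) * (-1 : ℝ)^k * x^(k+1)
          = 1 - (1-x)^(n+1) from key_binom (n+1) x]
    rw [h1, h2, ih, Finset.sum_range_succ]
    push_cast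
    ring

theorem stmt_12 (H : ℕ → ℝ) (hH : ∀ n, H n = ∑ j ∈ Finset.range n, (1 : ℝ) / (j + 1))
    (n : ℕ) (hn : 1 ≤ n) (x : ℝ) :
    ∑ k ∈ Finset.Icc 1 n, (n.choose k : ℝ) * (-1 : ℝ)^(k - 1) * x^k / k =
      H n - ∑ k ∈ Finset.Icc 1 n, (1 - x)^k / k := by
  have hIcc : ∀ f : ℕ → ℝ, ∑ k ∈ Finset.Icc 1 n, f k = ∑ j ∈ Finset.range n, f (j+1) := by
    intro f
    rw [← Finset.Ico_add_one_right_eq_Icc, Finset.sum_Ico_eq_sum_range]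
    simp [add_comm]
  rw [hIcc, hIcc, hH]
  have h := main_ind x n
  rw [Finset.sum_sub_distrib] at h
  simp only [Nat.add_sub_cancel]
  push_cast
  exact h
end

section
/- Let c, d : ℕ → ℝ satisfy c n = ∑_{k=0}^n C(n,k) d k for all n. Then for n ≥ 1, ∑_{k=0}^n C(n,k) * (-1)^{k-1} * H k * c k = (-1)^{n-1} * H n * d n + ∑_{m=0}^{n-1} (-1)^m * d m / (n-m), where H k is the k-th harmonic number. -/
open Finset

noncomputable def Hs (n : ℕ) : ℝ := ∑ j ∈ Finset.range n, (1 : ℝ) / (j + 1)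

lemma diff_split (f : ℕ → ℝ) (r m : ℕ) :
    ∑ i ∈ range (r+2), (-1:ℝ)^i * ((r+1).choose i : ℝ) * f (m+i)
      = (∑ i ∈ range (r+1), (-1:ℝ)^i * (r.choose i : ℝ) * f (m+i))
        - ∑ i ∈ range (r+1), (-1:ℝ)^i * (r.choose i : ℝ) * f (m+1+i) := by
  rw [Finset.sum_range_succ' (fun i => (-1:ℝ)^i * ((r+1).choose i : ℝ) * f (m+i)) (r+1)]
  rw [Finset.sum_range_succ' (fun i => (-1:ℝ)^i * (r.choose i : ℝ) * f (m+i)) r]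
  have hpascal : ∀ i, ((r+1).choose (i+1) : ℝ) = (r.choose i : ℝ) + (r.choose (i+1) : ℝ) := by
    intro i; rw [Nat.choose_succ_succ]; push_cast; ring
  have hsplit : ∑ i ∈ range (r+1), (-1:ℝ)^(i+1) * ((r+1).choose (i+1) : ℝ) * f (m+(i+1))
      = (∑ i ∈ range (r+1), (-1:ℝ)^(i+1) * (r.choose i : ℝ) * f (m+(i+1)))
        + ∑ i ∈ range (r+1), (-1:ℝ)^(i+1) * (r.choose (i+1) : ℝ) * f (m+(i+1)) := by
    rw [← Finset.sum_add_distrib]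
    exact Finset.sum_congr rfl fun i _ => by rw [hpascal]; ring
  rw [hsplit]
  have h1 : ∑ i ∈ range (r+1), (-1:ℝ)^(i+1) * (r.choose i : ℝ) * f (m+(i+1))
      = -∑ i ∈ range (r+1), (-1:ℝ)^i * (r.choose i : ℝ) * f (m+1+i) := by
    rw [← Finset.sum_neg_distrib]
    exact Finset.sum_congr rfl fun i _ => by rw [show m+(i+1) = m+1+i by ring]; ring
  have h2 : ∑ i ∈ range (r+1), (-1:ℝ)^(i+1) * (r.choose (i+1) : ℝ) * f (m+(i+1))
      = ∑ i ∈ range r, (-1:ℝ)^(i+1) * (r.choose (i+1) : ℝ) * f (m+(i+1)) := by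
    rw [Finset.sum_range_succ]
    simp [Nat.choose_succ_self]
  rw [h1, h2]
  simp [Nat.choose_zero_right]
  ring

lemma key : ∀ r, 1 ≤ r → ∀ m : ℕ, ∑ i ∈ range (r+1), (-1:ℝ)^i * (r.choose i : ℝ) * Hs (m+i)
    = -1 / (r * ((m+r).choose r : ℝ)) := by
  intro r hr
  induction r, hr using Nat.le_induction with
  | base =>
    intro m
    simp only [Finset.sum_range_succ, Finset.sum_range_zero]
    have : Hs (m+1) = Hs m + 1/(m+1) := by
      simp [Hs, Finset.sum_range_succ]
    rw [this]
    simp [Nat.choose_one_right]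
    push_cast
    field_simp
  | succ r hr ih =>
    intro m
    rw [show r + 1 + 1 = r + 2 from rfl, diff_split, ih m, ih (m+1)]
    have ha : 0 < ((m+r).choose r) := Nat.choose_pos (by omega)
    have hb : 0 < ((m+1+r).choose r) := Nat.choose_pos (by omega)
    have hcp : 0 < ((m+(r+1)).choose (r+1)) := Nat.choose_pos (by omega)
    have hb' : ((m+1+r).choose r) * (m+1) = (m+r+1) * ((m+r).choose r) := by
      have h1 := Nat.add_one_mul_choose_eq (m+r) m
      have h2 : (m+r).choose m = (m+r).choose r := by
        rw [← Nat.choose_symm (show m ≤ m + r by omega)]; congr 1; omega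
      have h3 : (m+r+1).choose (m+1) = (m+1+r).choose r := by
        have h4 := Nat.choose_symm (show m+1 ≤ m+r+1 by omega)
        have h5 : m+r+1-(m+1) = r := by omega
        rw [h5] at h4
        rw [show m+1+r = m+r+1 by omega, h4]
      rw [← h3, ← h2]
      omega
    have hc' : ((m+(r+1)).choose (r+1)) * (r+1) = ((m+1+r).choose r) * (m+1) := by
      have := Nat.choose_succ_right_eq (m+r+1) r
      have h4 : (m+r+1) - r = m+1 := by omega
      rw [h4] at this
      rw [show m+(r+1) = m+r+1 by ring, this]
      congr 2
      omega
    have hA : ((m+r).choose r : ℝ) ≠ 0 := by exact_mod_cast ha.ne'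
    have hB : ((m+1+r).choose r : ℝ) ≠ 0 := by exact_mod_cast hb.ne'
    have hC : ((m+(r+1)).choose (r+1) : ℝ) ≠ 0 := by exact_mod_cast hcp.ne'
    have hR : (r:ℝ) ≠ 0 := by exact_mod_cast (by omega : r ≠ 0)
    have hb'' : ((m+1+r).choose r : ℝ) * (m+1) = (m+r+1) * ((m+r).choose r : ℝ) := by
      exact_mod_cast congrArg (Nat.cast : ℕ → ℝ) hb'
    have hc'' : ((m+(r+1)).choose (r+1) : ℝ) * (r+1) = ((m+1+r).choose r : ℝ) * (m+1) := by
      exact_mod_cast congrArg (Nat.cast : ℕ → ℝ) hc'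
    push_cast
    push_cast at hb'' hc''
    field_simp
    rw [show m+(r+1) = m+r+1 by ring] at hc''
    linear_combination (((m+r).choose r : ℝ) - ((m+1+r).choose r : ℝ)) * hc'' - ((m+1+r).choose r : ℝ) * hb''


theorem stmt_14 (c d : ℕ → ℝ)
    (hc : ∀ n, c n = ∑ k ∈ Finset.range (n+1), (n.choose k : ℝ) * d k)
    (H : ℕ → ℝ) (hH : ∀ n, H n = ∑ j ∈ Finset.range n, (1 : ℝ) / (j + 1))
    (n : ℕ) (hn : 1 ≤ n) :
    ∑ k ∈ Finset.range (n+1), (n.choose k : ℝ) * (-1 : ℝ)^(k - 1) * H k * c k =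
      (-1 : ℝ)^(n - 1) * H n * d n + ∑ m ∈ Finset.range n, (-1 : ℝ)^m * d m / (n - m : ℕ) := by
  have hHs : ∀ k, H k = Hs k := fun k => by rw [hH]; rfl
  have hH0 : Hs 0 = 0 := by simp [Hs]
  -- Step 1: rewrite LHS with exponent k+1 and expand c
  have step1 : ∑ k ∈ Finset.range (n+1), (n.choose k : ℝ) * (-1 : ℝ)^(k - 1) * H k * c k
      = ∑ k ∈ range (n+1), ∑ j ∈ range (k+1),
          (n.choose k : ℝ) * (-1:ℝ)^(k+1) * Hs k * ((k.choose j : ℝ) * d j) := by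
    refine Finset.sum_congr rfl fun k _ => ?_
    rw [hHs, hc, Finset.mul_sum]
    refine Finset.sum_congr rfl fun j _ => ?_
    cases k with
    | zero => simp [hH0]
    | succ k =>
      have : (-1:ℝ)^(k+1-1) = (-1:ℝ)^(k+1+1) := by
        simp [pow_succ]
      rw [this]
  rw [step1]
  -- Step 2: swap the double sum
  have step2 : ∑ k ∈ range (n+1), ∑ j ∈ range (k+1),
          (n.choose k : ℝ) * (-1:ℝ)^(k+1) * Hs k * ((k.choose j : ℝ) * d j)
      = ∑ j ∈ range (n+1), ∑ k ∈ Finset.Ico j (n+1),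
          (n.choose k : ℝ) * (-1:ℝ)^(k+1) * Hs k * ((k.choose j : ℝ) * d j) := by
    apply Finset.sum_comm'
    intro k j
    simp only [Finset.mem_range, Finset.mem_Ico]
    omega
  rw [step2, Finset.sum_range_succ]
  -- the j = n term
  have hlast : ∑ k ∈ Finset.Ico n (n+1),
      (n.choose k : ℝ) * (-1:ℝ)^(k+1) * Hs k * ((k.choose n : ℝ) * d n)
      = (-1:ℝ)^(n-1) * H n * d n := by
    rw [Nat.Ico_succ_singleton, Finset.sum_singleton, Nat.choose_self, hHs]
    obtain ⟨s, rfl⟩ : ∃ s, n = s + 1 := ⟨n - 1, by omega⟩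
    simp [pow_succ]
  rw [hlast]
  -- the j < n terms
  have hmain : ∀ j ∈ range n, ∑ k ∈ Finset.Ico j (n+1),
      (n.choose k : ℝ) * (-1:ℝ)^(k+1) * Hs k * ((k.choose j : ℝ) * d j)
      = (-1:ℝ)^j * d j / ((n - j : ℕ) : ℝ) := by
    intro j hj
    rw [Finset.mem_range] at hj
    rw [Finset.sum_Ico_eq_sum_range]
    set r := n - j with hr
    have hr1 : 1 ≤ r := by omega
    have hnj : n + 1 - j = r + 1 := by omega
    have hjr : j + r = n := by omega
    rw [hnj]
    have hred : ∀ i ∈ range (r+1),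
        (n.choose (j+i) : ℝ) * (-1:ℝ)^(j+i+1) * Hs (j+i) * (((j+i).choose j : ℝ) * d j)
        = ((-1:ℝ)^(j+1) * (n.choose j : ℝ) * d j) * ((-1:ℝ)^i * (r.choose i : ℝ) * Hs (j+i)) := by
      intro i hi
      rw [Finset.mem_range] at hi
      have hcm : (n.choose (j+i)) * ((j+i).choose j) = n.choose j * r.choose i := by
        have := Nat.choose_mul (n := n) (k := j+i) (s := j) (by omega)
        simpa [show n - j = r from rfl, show j + i - j = i by omega] using this
      have hcm' : (n.choose (j+i) : ℝ) * ((j+i).choose j : ℝ) = (n.choose j : ℝ) * (r.choose i : ℝ) := by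
        exact_mod_cast congrArg (Nat.cast : ℕ → ℝ) hcm
      calc (n.choose (j+i) : ℝ) * (-1:ℝ)^(j+i+1) * Hs (j+i) * (((j+i).choose j : ℝ) * d j)
          = ((n.choose (j+i) : ℝ) * ((j+i).choose j : ℝ)) * ((-1:ℝ)^(j+i+1) * Hs (j+i) * d j) := by ring
        _ = ((n.choose j : ℝ) * (r.choose i : ℝ)) * ((-1:ℝ)^(j+i+1) * Hs (j+i) * d j) := by rw [hcm']
        _ = ((-1:ℝ)^(j+1) * (n.choose j : ℝ) * d j) * ((-1:ℝ)^i * (r.choose i : ℝ) * Hs (j+i)) := by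
            rw [show j+i+1 = (j+1)+i by ring, pow_add]
            ring
    rw [Finset.sum_congr rfl hred, ← Finset.mul_sum, key r hr1 j]
    have hCn : 0 < n.choose j := Nat.choose_pos (by omega)
    have hC : ((j+r).choose r : ℝ) = (n.choose j : ℝ) := by
      rw [hjr]
      have h4 := Nat.choose_symm (show j ≤ n by omega)
      rw [show n - j = r from rfl] at h4
      rw [h4]
    rw [hC]
    have hCne : ((n.choose j : ℝ)) ≠ 0 := by exact_mod_cast hCn.ne'
    have hRne : ((r:ℕ):ℝ) ≠ 0 := by exact_mod_cast (by omega : r ≠ 0)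
    field_simp
    ring
  rw [Finset.sum_congr rfl hmain]
  exact add_comm _ _
end

section
/- For n ≥ 1, ∑_{k=0}^n C(n,k) * (-1)^{k-1} * H k² / (k+1) = H n² / (n+1) - ∑_{m=0}^{n-1} H m / ((n-m)(m+1)), where H k is the k-th harmonic number. -/
open Finset

def hq (n : ℕ) : ℚ := ∑ j ∈ range n, (1:ℚ)/(j+1)
def hq2 (n : ℕ) : ℚ := ∑ j ∈ range n, ((1:ℚ)/(j+1))^2
def hqh (n : ℕ) : ℚ := ∑ j ∈ range n, hq (j+1)/(j+1)
def Tq (f : ℕ → ℚ) (N : ℕ) : ℚ := ∑ k ∈ range (N+1), (-1:ℚ)^k * (N.choose k) * f k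

lemma hq_succ (n : ℕ) : hq (n+1) = hq n + 1/(n+1) := by
  simp [hq, Finset.sum_range_succ]

lemma hq2_succ (n : ℕ) : hq2 (n+1) = hq2 n + (1/(n+1))^2 := by
  simp [hq2, Finset.sum_range_succ]

lemma hqh_succ (n : ℕ) : hqh (n+1) = hqh n + hq (n+1)/(n+1) := by
  simp [hqh, Finset.sum_range_succ]

lemma hq_zero : hq 0 = 0 := by simp [hq]

lemma Tq_pascal (f : ℕ → ℚ) (N : ℕ) :
    Tq f (N+1) = Tq f N - Tq (fun k => f (k+1)) N := by
  unfold Tq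
  rw [Finset.sum_range_succ' (fun k => (-1:ℚ)^k * ((N+1).choose k) * f k) (N+1)]
  have h1 : ∀ k ∈ range (N+1), (-1:ℚ)^(k+1) * ((N+1).choose (k+1)) * f (k+1)
      = -((-1:ℚ)^k * (N.choose k) * f (k+1)) - (-1:ℚ)^k * (N.choose (k+1)) * f (k+1) := by
    intro k _
    rw [Nat.choose_succ_succ]
    push_cast
    ring
  rw [Finset.sum_congr rfl h1, Finset.sum_sub_distrib, Finset.sum_neg_distrib]
  have h2 : ∑ k ∈ range (N+1), (-1:ℚ)^k * (N.choose k) * f k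
      = f 0 - ∑ k ∈ range (N+1), (-1:ℚ)^k * (N.choose (k+1)) * f (k+1) := by
    rw [Finset.sum_range_succ' (fun k => (-1:ℚ)^k * (N.choose k) * f k) N]
    rw [Finset.sum_range_succ (fun k => (-1:ℚ)^k * (N.choose (k+1)) * f (k+1)) N]
    have h4 : ∀ k ∈ range N, (-1:ℚ)^(k+1) * (N.choose (k+1)) * f (k+1)
        = -((-1:ℚ)^k * (N.choose (k+1)) * f (k+1)) := by intro k _; ring
    rw [Finset.sum_congr rfl h4, Finset.sum_neg_distrib]
    simp [Nat.choose_succ_self]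
    ring
  rw [h2]
  simp only [Nat.choose_zero_right, Nat.cast_one, pow_zero]
  ring

lemma Tq_absorb (f g : ℕ → ℚ) (hg : ∀ k, g (k+1) = f k) (N : ℕ) :
    Tq (fun k => f k / (k+1)) N = (g 0 - Tq g (N+1)) / (N+1) := by
  have h0 : Tq g (N+1) = g 0 - ∑ k ∈ range (N+1), (-1:ℚ)^k * ((N+1).choose (k+1)) * f k := by
    unfold Tq
    rw [Finset.sum_range_succ' (fun k => (-1:ℚ)^k * ((N+1).choose k) * g k) (N+1)]
    have h4 : ∀ k ∈ range (N+1), (-1:ℚ)^(k+1) * ((N+1).choose (k+1)) * g (k+1)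
        = -((-1:ℚ)^k * ((N+1).choose (k+1)) * f k) := by
      intro k _; rw [hg k]; ring
    rw [Finset.sum_congr rfl h4, Finset.sum_neg_distrib]
    simp
    ring
  rw [h0]
  have h5 : g 0 - (g 0 - ∑ k ∈ range (N+1), (-1:ℚ)^k * ((N+1).choose (k+1)) * f k)
      = ∑ k ∈ range (N+1), (-1:ℚ)^k * ((N+1).choose (k+1)) * f k := by ring
  rw [h5, Finset.sum_div]
  unfold Tq
  apply Finset.sum_congr rfl
  intro k _
  have key : ((N:ℚ)+1) * (N.choose k) = ((N+1).choose (k+1) : ℚ) * (k+1) := by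
    exact_mod_cast congrArg (Nat.cast (R := ℚ)) (Nat.add_one_mul_choose_eq N k)
  have hk1 : ((k:ℚ)+1) ≠ 0 := by positivity
  have hN1 : ((N:ℚ)+1) ≠ 0 := by positivity
  field_simp
  linear_combination (f k) * key

lemma Tq_add (f g : ℕ → ℚ) (N : ℕ) :
    Tq (fun k => f k + g k) N = Tq f N + Tq g N := by
  unfold Tq
  rw [← Finset.sum_add_distrib]
  exact Finset.sum_congr rfl (fun k _ => by ring)


lemma Tq_congr (f g : ℕ → ℚ) (h : ∀ k, f k = g k) (N : ℕ) : Tq f N = Tq g N := by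
  unfold Tq; exact Finset.sum_congr rfl (fun k _ => by rw [h k])


lemma Tq_one (M : ℕ) (hM : 1 ≤ M) : Tq (fun _ => (1:ℚ)) M = 0 := by
  have h := Int.alternating_sum_range_choose (n := M)
  rw [if_neg (by omega)] at h
  have h2 : ((∑ i ∈ range (M+1), (-1:ℤ)^i * (M.choose i) : ℤ) : ℚ) = 0 := by
    rw [h]; rfl
  push_cast at h2
  unfold Tq
  simpa using h2


lemma Tq_inv1 (N : ℕ) : Tq (fun k => 1/((k:ℚ)+1)) N = 1/(N+1) := by
  have := Tq_absorb (fun _ => (1:ℚ)) (fun _ => (1:ℚ)) (fun _ => rfl) N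
  rw [this, Tq_one (N+1) (by omega)]
  norm_num


lemma Tq_invj (M : ℕ) : Tq (fun j => 1/(j:ℚ)) M = -hq M := by
  induction M with
  | zero => simp [Tq, hq]
  | succ M ih =>
    rw [Tq_pascal]
    have he : Tq (fun k => 1/((k+1:ℕ):ℚ)) M = Tq (fun k => 1/((k:ℚ)+1)) M :=
      Tq_congr _ _ (fun k => by push_cast; ring) M
    rw [he, Tq_inv1, ih, hq_succ]
    ring


lemma Tq_inv2 (N : ℕ) : Tq (fun k => (1/((k:ℚ)+1))^2) N = hq (N+1)/(N+1) := by
  have hg : ∀ k : ℕ, (1:ℚ)/((k+1:ℕ):ℚ) = 1/((k:ℚ)+1) := fun k => by push_cast; ring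
  have h := Tq_absorb (fun k => 1/((k:ℚ)+1)) (fun j => 1/(j:ℚ)) hg N
  have he : Tq (fun k => (1/((k:ℚ)+1))^2) N = Tq (fun k => (1/((k:ℚ)+1))/((k:ℚ)+1)) N :=
    Tq_congr _ _ (fun k => by ring) N
  rw [he, h, Tq_invj]
  simp [hq_succ]


lemma Tq_invj2 (M : ℕ) : Tq (fun j => (1/(j:ℚ))^2) M = -hqh M := by
  induction M with
  | zero => simp [Tq, hqh]
  | succ M ih =>
    rw [Tq_pascal]
    have he : Tq (fun k => (1/((k+1:ℕ):ℚ))^2) M = Tq (fun k => (1/((k:ℚ)+1))^2) M :=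
      Tq_congr _ _ (fun k => by push_cast; ring) M
    rw [he, Tq_inv2, ih, hqh_succ]
    ring


lemma Tq_h (M : ℕ) : Tq hq (M+1) = -(1/(M+1)) := by
  rw [Tq_pascal]
  have he : Tq (fun k => hq (k+1)) M = Tq (fun k => hq k + 1/((k:ℚ)+1)) M :=
    Tq_congr _ _ (fun k => hq_succ k) M
  rw [he, Tq_add, Tq_inv1]
  ring


lemma Tq_hdiv (N : ℕ) : Tq (fun k => hq k/((k:ℚ)+1)) N = -hq N/(N+1) := by
  have hg : ∀ k : ℕ, hq (k+1) - 1/((k+1:ℕ):ℚ) = hq k := fun k => by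
    rw [hq_succ]; push_cast; ring
  have h := Tq_absorb hq (fun j => hq j - 1/(j:ℚ)) hg N
  have hsub : Tq (fun j => hq j - 1/(j:ℚ)) (N+1) = Tq hq (N+1) - Tq (fun j => 1/(j:ℚ)) (N+1) := by
    have := Tq_add (fun j => hq j - 1/(j:ℚ)) (fun j => 1/(j:ℚ)) (N+1)
    simp only [sub_add_cancel] at this
    linarith
  rw [hsub, Tq_h, Tq_invj] at h
  rw [h, hq_zero, hq_succ]
  have hN1 : ((N:ℚ)+1) ≠ 0 := by positivity
  field_simp
  ring


lemma Tq_hj (M : ℕ) : Tq (fun j => hq j/(j:ℚ)) M = -hq2 M := by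
  induction M with
  | zero => simp [Tq, hq2, hq_zero]
  | succ M ih =>
    rw [Tq_pascal]
    have he : Tq (fun k => hq (k+1)/((k+1:ℕ):ℚ)) M
        = Tq (fun k => hq k/((k:ℚ)+1) + (1/((k:ℚ)+1))^2) M :=
      Tq_congr _ _ (fun k => by rw [hq_succ]; push_cast; ring) M
    rw [he, Tq_add, Tq_hdiv, Tq_inv2, ih, hq2_succ, hq_succ]
    have hM1 : ((M:ℚ)+1) ≠ 0 := by positivity
    field_simp
    ring


lemma Tq_h2 (M : ℕ) : Tq (fun k => (hq k)^2) (M+1) = (2*hq M - hq (M+1))/(M+1) := by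
  rw [Tq_pascal]
  have he : Tq (fun k => (hq (k+1))^2) M
      = Tq (fun k => (hq k)^2 + (2*(hq k/((k:ℚ)+1)) + (1/((k:ℚ)+1))^2)) M :=
    Tq_congr _ _ (fun k => by rw [hq_succ]; push_cast; ring) M
  have h2 : Tq (fun k => 2*(hq k/((k:ℚ)+1))) M = 2 * Tq (fun k => hq k/((k:ℚ)+1)) M := by
    unfold Tq
    rw [Finset.mul_sum]
    exact Finset.sum_congr rfl (fun k _ => by ring)
  rw [he, Tq_add, Tq_add, h2, Tq_hdiv, Tq_inv2, hq_succ]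
  have hM1 : ((M:ℚ)+1) ≠ 0 := by positivity
  field_simp
  ring

lemma W1 (n : ℕ) : ∑ m ∈ range n, hq m/((m:ℚ)+1) = hqh n - hq2 n := by
  unfold hqh hq2
  rw [← Finset.sum_sub_distrib]
  apply Finset.sum_congr rfl
  intro m _
  rw [hq_succ]
  have : ((m:ℚ)+1) ≠ 0 := by positivity
  field_simp
  ring


lemma refl_inv (n : ℕ) : ∑ j ∈ range n, (1:ℚ)/((n-j:ℕ):ℚ) = hq n := by
  unfold hq
  rw [← Finset.sum_range_reflect (fun j => (1:ℚ)/((j:ℚ)+1)) n]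
  apply Finset.sum_congr rfl
  intro j hj
  have hjn : j < n := Finset.mem_range.mp hj
  have he : (n-1-j) + 1 = n - j := by omega
  rw [← he]
  push_cast
  ring


lemma Ksum (n : ℕ) : ∑ j ∈ range n, (1:ℚ)/((n-j:ℕ):ℚ)/((j:ℚ)+1) = 2*hq n/((n:ℚ)+1) := by
  have h1 : ∀ j ∈ range n, (1:ℚ)/((n-j:ℕ):ℚ)/((j:ℚ)+1)
      = (1/((n:ℚ)+1)) * (1/((n-j:ℕ):ℚ) + 1/((j:ℚ)+1)) := by
    intro j hj
    have hjn : j < n := Finset.mem_range.mp hj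
    have hc : ((n-j:ℕ):ℚ) = (n:ℚ) - (j:ℚ) := by
      rw [Nat.cast_sub (by omega)]
    have h0 : ((n-j:ℕ):ℚ) ≠ 0 := by
      rw [hc]
      have : (j:ℚ) < (n:ℚ) := by exact_mod_cast hjn
      linarith
    have h0' : ((j:ℚ)+1) ≠ 0 := by positivity
    have h0'' : ((n:ℚ)+1) ≠ 0 := by positivity
    field_simp
    rw [hc]
    ring
  rw [Finset.sum_congr rfl h1, ← Finset.mul_sum, Finset.sum_add_distrib, refl_inv]
  have : ∑ j ∈ range n, (1:ℚ)/((j:ℚ)+1) = hq n := rfl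
  rw [this]
  ring


lemma W2 (n : ℕ) : ∑ m ∈ range n, hq m/((n-m:ℕ):ℚ) = (hq n)^2 - hq2 n := by
  have key : ∀ n, ∑ j ∈ range n, hq (n-1-j)/((j:ℚ)+1) = (hq n)^2 - hq2 n := by
    intro n
    induction n with
    | zero => simp [hq_zero, hq2]
    | succ n ih =>
      rw [Finset.sum_range_succ]
      have ht : n + 1 - 1 - n = 0 := by omega
      rw [ht, hq_zero]
      have h1 : ∀ j ∈ range n, hq (n+1-1-j)/((j:ℚ)+1)
          = hq (n-1-j)/((j:ℚ)+1) + (1:ℚ)/((n-j:ℕ):ℚ)/((j:ℚ)+1) := by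
        intro j hj
        have hjn : j < n := Finset.mem_range.mp hj
        have he : n+1-1-j = (n-1-j) + 1 := by omega
        have he2 : (n-1-j) + 1 = n - j := by omega
        have hc : ((n-j:ℕ):ℚ) = ((n-1-j:ℕ):ℚ) + 1 := by exact_mod_cast congrArg (Nat.cast (R:=ℚ)) he2.symm
        rw [he, hq_succ, hc]
        ring
      rw [Finset.sum_congr rfl h1, Finset.sum_add_distrib, ih, Ksum, hq_succ, hq2_succ]
      have : ((n:ℚ)+1) ≠ 0 := by positivity
      field_simp
      ring
  rw [← key n, ← Finset.sum_range_reflect (fun m => hq m/((n-m:ℕ):ℚ)) n]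
  apply Finset.sum_congr rfl
  intro j hj
  have hjn : j < n := Finset.mem_range.mp hj
  have he : n - (n-1-j) = j + 1 := by omega
  rw [he]
  push_cast
  ring

theorem stmt_16 (H : ℕ → ℚ) (hH : ∀ n, H n = ∑ j ∈ Finset.range n, (1 : ℚ) / (j + 1))
    (n : ℕ) (hn : 1 ≤ n) :
    ∑ k ∈ Finset.range (n+1), (n.choose k : ℚ) * (-1 : ℚ)^(k - 1) * (H k)^2 / (k + 1) =
      (H n)^2 / (n + 1) - ∑ m ∈ Finset.range n, H m / (((n - m : ℕ) : ℚ) * (m + 1)) := by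
  have hHh : ∀ k, H k = hq k := fun k => hH k
  simp only [hHh]
  -- Step 1: LHS = - Tq (fun k => hq k ^ 2 / (k+1)) n
  have hL : ∑ k ∈ Finset.range (n+1), (n.choose k : ℚ) * (-1 : ℚ)^(k - 1) * (hq k)^2 / (k + 1)
      = -Tq (fun k => (hq k)^2/((k:ℚ)+1)) n := by
    unfold Tq
    rw [← Finset.sum_neg_distrib]
    apply Finset.sum_congr rfl
    intro k _
    cases k with
    | zero => simp [hq_zero]
    | succ s =>
      have hs : s + 1 - 1 = s := rfl
      rw [hs]
      push_cast
      rw [pow_succ]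
      ring
  rw [hL]
  -- Step 2: absorption with g j = (hq j - 1/j)^2
  have hg : ∀ k : ℕ, (fun j => (hq j - 1/(j:ℚ))^2) (k+1) = (hq k)^2 := by
    intro k
    simp only
    rw [hq_succ]
    push_cast
    ring
  have habs := Tq_absorb (fun k => (hq k)^2) (fun j => (hq j - 1/(j:ℚ))^2) hg n
  rw [habs]
  -- Step 3: evaluate Tq g (n+1)
  have hgexp : Tq (fun j => (hq j - 1/(j:ℚ))^2) (n+1)
      = Tq (fun j => (hq j)^2 + ((-2) * (hq j/(j:ℚ)) + (1/(j:ℚ))^2)) (n+1) :=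
    Tq_congr _ _ (fun j => by ring) (n+1)
  have hmul : Tq (fun j => (-2 : ℚ) * (hq j/(j:ℚ))) (n+1) = (-2) * Tq (fun j => hq j/(j:ℚ)) (n+1) := by
    unfold Tq
    rw [Finset.mul_sum]
    exact Finset.sum_congr rfl (fun k _ => by ring)
  rw [hgexp, Tq_add, Tq_add, hmul, Tq_h2, Tq_hj, Tq_invj2]
  -- Step 4: RHS sum split
  have hR : ∑ m ∈ Finset.range n, hq m / (((n - m : ℕ) : ℚ) * ((m:ℚ) + 1))
      = (1/((n:ℚ)+1)) * ((hq n)^2 - hq2 n) + (1/((n:ℚ)+1)) * (hqh n - hq2 n) := by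
    have h1 : ∀ m ∈ range n, hq m / (((n - m : ℕ) : ℚ) * ((m:ℚ) + 1))
        = (1/((n:ℚ)+1)) * (hq m/((n-m:ℕ):ℚ)) + (1/((n:ℚ)+1)) * (hq m/((m:ℚ)+1)) := by
      intro m hm
      have hmn : m < n := Finset.mem_range.mp hm
      have hc : ((n-m:ℕ):ℚ) = (n:ℚ) - (m:ℚ) := by rw [Nat.cast_sub (by omega)]
      have h0 : ((n-m:ℕ):ℚ) ≠ 0 := by
        rw [hc]; have : (m:ℚ) < (n:ℚ) := by exact_mod_cast hmn
        linarith
      have h0' : ((m:ℚ)+1) ≠ 0 := by positivity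
      have h0'' : ((n:ℚ)+1) ≠ 0 := by positivity
      field_simp
      rw [hc]
      ring
    rw [Finset.sum_congr rfl h1, Finset.sum_add_distrib, ← Finset.mul_sum, ← Finset.mul_sum,
      W1, W2]
  rw [hR]
  -- Step 5: final algebra
  have h0 : (hq 0 - 1/((0:ℕ):ℚ))^2 = 0 := by
    rw [hq_zero]; norm_num
  rw [h0, hq_succ n, hq2_succ n, hqh_succ n, hq_succ n]
  have hN1 : ((n:ℚ)+1) ≠ 0 := by positivity
  push_cast
  field_simp
  ring
end

section
/- For n ≥ 1, ∑_{k=0}^n C(n,k) * (-1)^{k-1} * H k * F k = H n * F n - ∑_{m=0}^{n-1} F m / (n-m), where H k is the k-th harmonic number and F k the k-th Fibonacci number (F 0 = 0, F 1 = 1). -/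
open Finset Nat

lemma pascal_split (n : ℕ) (f : ℕ → ℚ) :
    ∑ k ∈ range (n+2), ((n+1).choose k : ℚ) * f k
      = ∑ k ∈ range (n+1), (n.choose k : ℚ) * f k
        + ∑ k ∈ range (n+1), (n.choose k : ℚ) * f (k+1) := by
  rw [Finset.sum_range_succ' (fun k => ((n+1).choose k : ℚ) * f k) (n+1)]
  rw [Finset.sum_range_succ' (fun k => (n.choose k : ℚ) * f k) n]
  have h1 : ∀ k, (((n+1).choose (k+1) : ℕ) : ℚ) = (n.choose k : ℚ) + (n.choose (k+1) : ℚ) := by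
    intro k; rw [Nat.choose_succ_succ]; push_cast; ring
  simp only [h1, add_mul]
  rw [Finset.sum_add_distrib]
  have h2 : ∑ k ∈ range (n+1), (n.choose (k+1) : ℚ) * f (k+1)
      = ∑ k ∈ range n, (n.choose (k+1) : ℚ) * f (k+1) := by
    rw [Finset.sum_range_succ]; simp [Nat.choose_succ_self]
  rw [h2]
  simp [Nat.choose_zero_right]
  ring

lemma ab (n : ℕ) :
    (∑ k ∈ range (n+2), (((n+1).choose k : ℕ) : ℚ) * ((-1)^k * fib k) = -(fib (n+1) : ℚ))
    ∧ (∑ k ∈ range (n+2), (((n+1).choose k : ℕ) : ℚ) * ((-1)^k * fib (k+1)) = (fib n : ℚ)) := by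
  induction n with
  | zero =>
      constructor <;> · simp [Finset.sum_range_succ]
  | succ n ih =>
      obtain ⟨ha, hb⟩ := ih
      constructor
      · rw [pascal_split (n+1) (fun k => (-1)^k * fib k)]
        have : ∑ k ∈ range (n+2), (((n+1).choose k : ℕ) : ℚ) * ((-1)^(k+1) * fib (k+1))
            = -∑ k ∈ range (n+2), (((n+1).choose k : ℕ) : ℚ) * ((-1)^k * fib (k+1)) := by
          rw [← Finset.sum_neg_distrib]
          exact Finset.sum_congr rfl (fun k _ => by ring)
        rw [this, ha, hb]
        have : (fib (n+2) : ℚ) = fib (n+1) + fib n := by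
          rw [fib_add_two]; push_cast; ring
        rw [this]; ring
      · rw [pascal_split (n+1) (fun k => (-1)^k * fib (k+1))]
        have : ∑ k ∈ range (n+2), (((n+1).choose k : ℕ) : ℚ) * ((-1)^(k+1) * fib (k+2))
            = -∑ k ∈ range (n+2), (((n+1).choose k : ℕ) : ℚ)
                * ((-1)^k * fib k + (-1)^k * fib (k+1)) := by
          rw [← Finset.sum_neg_distrib]
          refine Finset.sum_congr rfl (fun k _ => ?_)
          have : (fib (k+2) : ℚ) = fib k + fib (k+1) := by rw [fib_add_two]; push_cast; ring
          rw [this]; ring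
        rw [this]
        simp only [mul_add, Finset.sum_add_distrib]
        rw [ha, hb]; ring

lemma a_all (n : ℕ) :
    ∑ k ∈ range (n+1), ((n.choose k : ℕ) : ℚ) * ((-1)^k * fib k) = -(fib n : ℚ) := by
  cases n with
  | zero => simp
  | succ n => exact (ab n).1

def hh (m : ℕ) : ℚ := ∑ j ∈ range m, (1:ℚ)/(j+1)

def Wa (n : ℕ) : ℚ := ∑ k ∈ range (n+1), ((n.choose k : ℕ) : ℚ) * ((-1)^k * fib k * (hh n - hh k))
def Wb (n : ℕ) : ℚ := ∑ k ∈ range (n+1), ((n.choose k : ℕ) : ℚ) * ((-1)^k * fib (k+1) * (hh n - hh k))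
def Tt (n : ℕ) : ℚ := ∑ m ∈ range n, (fib m : ℚ) / ((n - m : ℕ) : ℚ)

lemma choose_div (n k : ℕ) :
    ((n.choose k : ℕ) : ℚ) / (k+1) = (((n+1).choose (k+1) : ℕ) : ℚ) / (n+1) := by
  have h := Nat.add_one_mul_choose_eq n k
  have h' : ((n:ℚ)+1) * (n.choose k : ℚ) = ((n+1).choose (k+1) : ℚ) * ((k:ℚ)+1) := by
    exact_mod_cast h
  have hk : ((k:ℚ)+1) ≠ 0 := by positivity
  have hn : ((n:ℚ)+1) ≠ 0 := by positivity
  field_simp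
  linarith [h']

lemma shiftA (n : ℕ) :
    ∑ k ∈ range (n+1), (((n+1).choose (k+1) : ℕ) : ℚ) * ((-1)^k * fib (k+1))
      = (fib (n+1) : ℚ) := by
  have h := (ab n).1
  rw [Finset.sum_range_succ' (fun k => (((n+1).choose k : ℕ) : ℚ) * ((-1)^k * fib k)) (n+1)] at h
  simp only [Nat.fib_zero, Nat.cast_zero, mul_zero, zero_mul, pow_zero, one_mul, add_zero,
    Nat.choose_zero_right, Nat.cast_one, mul_one] at h
  have h2 : ∑ k ∈ range (n+1), (((n+1).choose (k+1) : ℕ) : ℚ) * ((-1)^(k+1) * fib (k+1))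
      = -∑ k ∈ range (n+1), (((n+1).choose (k+1) : ℕ) : ℚ) * ((-1)^k * fib (k+1)) := by
    rw [← Finset.sum_neg_distrib]
    exact Finset.sum_congr rfl (fun k _ => by ring)
  rw [h2] at h
  linarith [h]

lemma shiftB (n : ℕ) :
    ∑ k ∈ range (n+1), (((n+1).choose (k+1) : ℕ) : ℚ) * ((-1)^k * fib (k+2))
      = 1 - (fib n : ℚ) := by
  have h := (ab n).2
  rw [Finset.sum_range_succ' (fun k => (((n+1).choose k : ℕ) : ℚ) * ((-1)^k * fib (k+1))) (n+1)] at h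
  simp only [Nat.choose_zero_right, Nat.cast_one, pow_zero, one_mul, Nat.fib_one, mul_one] at h
  have h2 : ∑ k ∈ range (n+1), (((n+1).choose (k+1) : ℕ) : ℚ) * ((-1)^(k+1) * fib (k+1+1))
      = -∑ k ∈ range (n+1), (((n+1).choose (k+1) : ℕ) : ℚ) * ((-1)^k * fib (k+2)) := by
    rw [← Finset.sum_neg_distrib]
    exact Finset.sum_congr rfl (fun k _ => by ring_nf)
  rw [h2] at h
  have hf1 : (fib (0+1) : ℚ) = 1 := by norm_num
  rw [hf1] at h
  linarith [h]

lemma GA (n : ℕ) :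
    ∑ k ∈ range (n+1), ((n.choose k : ℕ) : ℚ) * ((-1)^k * fib (k+1)) / ((k:ℚ)+1)
      = (fib (n+1) : ℚ) / ((n:ℚ)+1) := by
  have : ∀ k ∈ range (n+1),
      ((n.choose k : ℕ) : ℚ) * ((-1)^k * fib (k+1)) / ((k:ℚ)+1)
        = (((n+1).choose (k+1) : ℕ) : ℚ) * ((-1)^k * fib (k+1)) / ((n:ℚ)+1) := by
    intro k _
    have hc := choose_div n k
    rw [mul_comm, mul_div_assoc, hc, ← mul_div_assoc, mul_comm]
  rw [Finset.sum_congr rfl this, ← Finset.sum_div, shiftA]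

lemma GB (n : ℕ) :
    ∑ k ∈ range (n+1), ((n.choose k : ℕ) : ℚ) * ((-1)^k * fib (k+2)) / ((k:ℚ)+1)
      = (1 - (fib n : ℚ)) / ((n:ℚ)+1) := by
  have : ∀ k ∈ range (n+1),
      ((n.choose k : ℕ) : ℚ) * ((-1)^k * fib (k+2)) / ((k:ℚ)+1)
        = (((n+1).choose (k+1) : ℕ) : ℚ) * ((-1)^k * fib (k+2)) / ((n:ℚ)+1) := by
    intro k _
    have hc := choose_div n k
    rw [mul_comm, mul_div_assoc, hc, ← mul_div_assoc, mul_comm]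
  rw [Finset.sum_congr rfl this, ← Finset.sum_div, shiftB]

lemma hh_succ (m : ℕ) : hh (m+1) = hh m + 1/((m:ℚ)+1) := by
  simp [hh, Finset.sum_range_succ]

lemma R1 (n : ℕ) : Wa (n+1) = Wa n - Wb n := by
  have expand : Wa (n+1)
      = ∑ k ∈ range (n+2), (((n+1).choose k : ℕ) : ℚ) * ((-1)^k * fib k * (hh n - hh k))
        + (1/((n:ℚ)+1)) * ∑ k ∈ range (n+2), (((n+1).choose k : ℕ) : ℚ) * ((-1)^k * fib k) := by
    rw [Wa, Finset.mul_sum, ← Finset.sum_add_distrib]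
    refine Finset.sum_congr rfl (fun k _ => ?_)
    rw [hh_succ]; ring
  rw [expand, a_all (n+1)]
  rw [pascal_split n (fun k => (-1)^k * fib k * (hh n - hh k))]
  have step : ∑ k ∈ range (n+1), ((n.choose k : ℕ) : ℚ) * ((-1)^(k+1) * fib (k+1) * (hh n - hh (k+1)))
      = -Wb n + ∑ k ∈ range (n+1), ((n.choose k : ℕ) : ℚ) * ((-1)^k * fib (k+1)) / ((k:ℚ)+1) := by
    rw [Wb, ← Finset.sum_neg_distrib, ← Finset.sum_add_distrib]
    refine Finset.sum_congr rfl (fun k _ => ?_)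
    rw [hh_succ]; ring
  rw [step, GA]
  rw [show Wa n = ∑ k ∈ range (n+1), ((n.choose k : ℕ) : ℚ) * ((-1)^k * fib k * (hh n - hh k)) from rfl]
  push_cast
  ring

lemma R2 (n : ℕ) : Wb (n+1) = -Wa n + 1/((n:ℚ)+1) := by
  have expand : Wb (n+1)
      = ∑ k ∈ range (n+2), (((n+1).choose k : ℕ) : ℚ) * ((-1)^k * fib (k+1) * (hh n - hh k))
        + (1/((n:ℚ)+1)) * ∑ k ∈ range (n+2), (((n+1).choose k : ℕ) : ℚ) * ((-1)^k * fib (k+1)) := by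
    rw [Wb, Finset.mul_sum, ← Finset.sum_add_distrib]
    refine Finset.sum_congr rfl (fun k _ => ?_)
    rw [hh_succ]; ring
  rw [expand, (ab n).2]
  rw [pascal_split n (fun k => (-1)^k * fib (k+1) * (hh n - hh k))]
  have step : ∑ k ∈ range (n+1), ((n.choose k : ℕ) : ℚ) * ((-1)^(k+1) * fib (k+2) * (hh n - hh (k+1)))
      = ∑ k ∈ range (n+1),
          (-(((n.choose k : ℕ) : ℚ) * ((-1)^k * fib k * (hh n - hh k)))
            - ((n.choose k : ℕ) : ℚ) * ((-1)^k * fib (k+1) * (hh n - hh k))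
            + ((n.choose k : ℕ) : ℚ) * ((-1)^k * fib (k+2)) / ((k:ℚ)+1)) := by
    refine Finset.sum_congr rfl (fun k _ => ?_)
    have hf : (fib (k+2) : ℚ) = fib k + fib (k+1) := by rw [fib_add_two]; push_cast; ring
    rw [hh_succ, hf]; ring
  rw [step]
  simp only [Finset.sum_add_distrib, Finset.sum_sub_distrib, Finset.sum_neg_distrib]
  rw [GB, Wa]
  have hn : ((n:ℚ)+1) ≠ 0 := by positivity
  field_simp
  ring

lemma Trefl (n : ℕ) : Tt n = ∑ j ∈ range n, (fib (n-1-j) : ℚ) / ((j:ℚ)+1) := by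
  rw [Tt, ← Finset.sum_range_reflect]
  refine Finset.sum_congr rfl (fun j hj => ?_)
  rw [Finset.mem_range] at hj
  congr 1
  have : n - (n - 1 - j) = j + 1 := by omega
  rw [this]
  push_cast; ring

lemma Trec (n : ℕ) : Tt (n+2) = Tt (n+1) + Tt n + 1/((n:ℚ)+1) := by
  rw [Trefl (n+2), Trefl (n+1), Trefl n]
  have e2 : ∑ j ∈ range (n+2), (fib (n+2-1-j) : ℚ) / ((j:ℚ)+1)
      = ∑ j ∈ range (n+1), (fib (n+1-j) : ℚ) / ((j:ℚ)+1) := by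
    rw [Finset.sum_range_succ]
    have : n+2-1-(n+1) = 0 := by omega
    rw [this]
    simp only [Nat.fib_zero, Nat.cast_zero, zero_div, add_zero]
    refine Finset.sum_congr rfl (fun j hj => ?_)
    congr 2 <;> omega
  rw [e2]
  rw [Finset.sum_range_succ (fun j => (fib (n+1-j) : ℚ) / ((j:ℚ)+1)) n]
  rw [Finset.sum_range_succ (fun j => (fib (n+1-1-j) : ℚ) / ((j:ℚ)+1)) n]
  have hlast1 : (fib (n+1-n) : ℚ) / ((n:ℚ)+1) = 1/((n:ℚ)+1) := by
    have : n+1-n = 1 := by omega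
    rw [this]; simp
  have hlast2 : (fib (n+1-1-n) : ℚ) / ((n:ℚ)+1) = 0 := by
    have : n+1-1-n = 0 := by omega
    rw [this]; simp
  rw [hlast1, hlast2]
  have hmain : ∑ j ∈ range n, (fib (n+1-j) : ℚ) / ((j:ℚ)+1)
      = ∑ j ∈ range n, ((fib (n+1-1-j) : ℚ) / ((j:ℚ)+1) + (fib (n-1-j) : ℚ) / ((j:ℚ)+1)) := by
    refine Finset.sum_congr rfl (fun j hj => ?_)
    rw [Finset.mem_range] at hj
    have h1 : n+1-j = (n-1-j)+2 := by omega
    have h2 : n+1-1-j = (n-1-j)+1 := by omega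
    rw [h1, h2, fib_add_two]
    push_cast
    ring
  rw [hmain, Finset.sum_add_distrib]
  ring

lemma key_s17 (n : ℕ) : Wa n = -Tt n ∧ Wa (n+1) = -Tt (n+1) := by
  induction n with
  | zero =>
      constructor
      · simp [Wa, Tt, Finset.sum_range_succ]
      · have h0 : Wa 0 = 0 := by simp [Wa, Finset.sum_range_succ]
        have hb0 : Wb 0 = 0 := by simp [Wb, Finset.sum_range_succ, hh]
        rw [R1 0, h0, hb0]
        simp [Tt, Finset.sum_range_succ]
  | succ n ih =>
      obtain ⟨h1, h2⟩ := ih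
      refine ⟨h2, ?_⟩
      rw [R1 (n+1), R2 n, h1, h2, Trec n]
      push_cast
      ring

theorem stmt_17 (H : ℕ → ℚ) (hH : ∀ n, H n = ∑ j ∈ Finset.range n, (1 : ℚ) / (j + 1))
    (n : ℕ) (hn : 1 ≤ n) :
    ∑ k ∈ Finset.range (n+1), (n.choose k : ℚ) * (-1 : ℚ)^(k - 1) * H k * (Nat.fib k : ℚ) =
      H n * (Nat.fib n : ℚ) - ∑ m ∈ Finset.range n, (Nat.fib m : ℚ) / (n - m : ℕ) := by
  have hHh : ∀ m, H m = hh m := fun m => hH m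
  have hT : ∑ m ∈ Finset.range n, (Nat.fib m : ℚ) / ((n - m : ℕ) : ℚ) = Tt n := rfl
  have hL : ∑ k ∈ Finset.range (n+1), (n.choose k : ℚ) * (-1 : ℚ)^(k - 1) * H k * (Nat.fib k : ℚ)
      = -∑ k ∈ range (n+1), ((n.choose k : ℕ) : ℚ) * ((-1)^k * fib k * hh k) := by
    rw [← Finset.sum_neg_distrib]
    refine Finset.sum_congr rfl (fun k _ => ?_)
    rw [hHh]
    cases k with
    | zero => simp
    | succ k =>
        have : (k+1) - 1 = k := by omega
        rw [this, pow_succ]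
        ring
  have split : ∑ k ∈ range (n+1), ((n.choose k : ℕ) : ℚ) * ((-1)^k * fib k * hh k)
      = hh n * ∑ k ∈ range (n+1), ((n.choose k : ℕ) : ℚ) * ((-1)^k * fib k) - Wa n := by
    rw [Wa, Finset.mul_sum, ← Finset.sum_sub_distrib]
    exact Finset.sum_congr rfl (fun k _ => by ring)
  rw [hL, split, a_all n, (key_s17 n).1, hT, hHh n]
  ring
end

section
/- Let c, d : ℕ → ℝ satisfy c n = ∑_{k=0}^n C(n,k) d k for all n. Then for all n ≥ 0, ∑_{k=0}^n C(n,k) * (-1)^{k-1} * F k * c k = ∑_{m=0}^n C(n,m) * d m * F_{n-2m}, where F denotes the Fibonacci sequence extended to negative indices by F_{-j} = (-1)^{j+1} F j. -/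
/-- Fibonacci sequence extended to integer indices: `fibZ (-j) = (-1)^(j+1) * fib j`. -/
noncomputable def fibZ (z : ℤ) : ℝ :=
  if 0 ≤ z then (Nat.fib z.toNat : ℝ) else (-1 : ℝ)^((-z).toNat + 1) * (Nat.fib (-z).toNat : ℝ)

lemma fibZ_ofNat (n : ℕ) : fibZ n = Nat.fib n := by simp [fibZ]

lemma fibZ_neg (n : ℕ) : fibZ (-((n:ℤ)+1)) = (-1:ℝ)^(n+2) * Nat.fib (n+1) := by
  have h : ¬ (0:ℤ) ≤ -((n:ℤ)+1) := by omega
  have ht : (((n:ℤ)+1)).toNat = n+1 := by omega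
  simp only [fibZ, if_neg h, neg_neg, ht]

lemma fibZ_rec (z : ℤ) : fibZ z = fibZ (z+2) - fibZ (z+1) := by
  obtain ⟨m, rfl | rfl⟩ := z.eq_nat_or_neg
  · have e2 : ((m:ℤ)+2) = ((m+2 : ℕ) : ℤ) := by push_cast; ring
    have e1 : ((m:ℤ)+1) = ((m+1 : ℕ) : ℤ) := by push_cast; ring
    rw [e2, e1, fibZ_ofNat, fibZ_ofNat, fibZ_ofNat, Nat.fib_add_two]
    push_cast; ring
  · match m with
    | 0 => norm_num [fibZ, show ((2:ℤ)).toNat = 2 from rfl, show ((1:ℤ)).toNat = 1 from rfl]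
    | 1 => norm_num [fibZ, show ((2:ℤ)).toNat = 2 from rfl, show ((1:ℤ)).toNat = 1 from rfl]
    | 2 => norm_num [fibZ, show ((2:ℤ)).toNat = 2 from rfl, show ((1:ℤ)).toNat = 1 from rfl]
    | (k+3) =>
      have h1 : (-((k+3:ℕ):ℤ)) = -(((k+2:ℕ):ℤ)+1) := by push_cast; ring
      have h2 : (-((k+3:ℕ):ℤ)+2) = -(((k:ℕ):ℤ)+1) := by push_cast; ring
      have h3 : (-((k+3:ℕ):ℤ)+1) = -(((k+1:ℕ):ℤ)+1) := by push_cast; ring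
      rw [h2, h3, fibZ_neg, fibZ_neg]
      rw [h1, fibZ_neg]
      rw [show k+2+2 = (k+2)+2 from rfl, Nat.fib_add_two]
      push_cast
      ring

lemma key_s18 : ∀ (m j : ℕ), ∑ i ∈ Finset.range (m+1), (m.choose i : ℝ) * (-1:ℝ)^i * (Nat.fib (i+j) : ℝ)
    = (-1:ℝ)^m * fibZ ((j:ℤ) - m) := by
  intro m
  induction m with
  | zero => intro j; simp [fibZ_ofNat]
  | succ m ih =>
    intro j
    rw [Finset.sum_range_succ']
    have step : ∀ i, ((m+1).choose (i+1) : ℝ) * (-1:ℝ)^(i+1) * (Nat.fib (i+1+j) : ℝ)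
        = -((m.choose i : ℝ) * (-1:ℝ)^i * (Nat.fib (i+(j+1)) : ℝ))
          + -((m.choose (i+1) : ℝ) * (-1:ℝ)^(i+1) * (Nat.fib ((i+1)+j) : ℝ)) * (-1) := by
      intro i
      rw [Nat.choose_succ_succ]
      push_cast
      rw [show i+1+j = i+(j+1) from by ring]
      ring
    rw [Finset.sum_congr rfl (fun i _ => step i), Finset.sum_add_distrib]
    have h1 : ∑ i ∈ Finset.range (m+1), -((m.choose i : ℝ) * (-1:ℝ)^i * (Nat.fib (i+(j+1)) : ℝ))
        = -((-1:ℝ)^m * fibZ (((j+1:ℕ):ℤ) - m)) := by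
      rw [Finset.sum_neg_distrib, ih (j+1)]
    have h2 : ∑ i ∈ Finset.range (m+1), -((m.choose (i+1) : ℝ) * (-1:ℝ)^(i+1) * (Nat.fib ((i+1)+j) : ℝ)) * (-1)
        = ((-1:ℝ)^m * fibZ ((j:ℤ) - m)) - (m.choose 0 : ℝ) * (-1:ℝ)^0 * (Nat.fib (0+j) : ℝ) := by
      have := Finset.sum_range_succ' (fun i => (m.choose i : ℝ) * (-1:ℝ)^i * (Nat.fib (i+j) : ℝ)) (m+1)
      rw [Finset.sum_range_succ, ih j] at this
      simp only [Nat.choose_succ_self, Nat.cast_zero, zero_mul, add_zero] at this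
      have e : ∑ i ∈ Finset.range (m+1), -((m.choose (i+1) : ℝ) * (-1:ℝ)^(i+1) * (Nat.fib ((i+1)+j) : ℝ)) * (-1)
          = ∑ i ∈ Finset.range (m+1), (m.choose (i+1) : ℝ) * (-1:ℝ)^(i+1) * (Nat.fib ((i+1)+j) : ℝ) := by
        apply Finset.sum_congr rfl; intro i _; ring
      rw [e]
      linarith [this]
    rw [h1, h2]
    have hr := fibZ_rec ((j:ℤ) - (m+1))
    rw [show (j:ℤ) - (m+1) + 2 = ((j+1:ℕ):ℤ) - m from by push_cast; ring,
        show (j:ℤ) - (m+1) + 1 = (j:ℤ) - m from by push_cast; ring] at hr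
    push_cast
    rw [show (j:ℤ) - (↑m + 1) = (j:ℤ) - ((m:ℤ)+1) from by push_cast; ring] at hr ⊢
    rw [hr]
    simp
    ring

lemma sign_fib (k : ℕ) : (-1:ℝ)^(k-1) * (Nat.fib k : ℝ) = (-1:ℝ)^(k+1) * (Nat.fib k : ℝ) := by
  match k with
  | 0 => simp
  | (k+1) =>
    rw [show k+1-1 = k from rfl, show k+1+1 = k+2 from rfl, pow_add]
    ring

lemma neg_one_pow_congr_mod2 (p q : ℕ) (h : p % 2 = q % 2) : (-1:ℝ)^p = (-1:ℝ)^q := by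
  rcases Nat.even_or_odd p with hp | hp
  · rw [hp.neg_one_pow, (Nat.even_iff.mpr (by rw [Nat.even_iff] at hp; omega)).neg_one_pow]
  · rw [hp.neg_one_pow, (Nat.odd_iff.mpr (by rw [Nat.odd_iff] at hp; omega)).neg_one_pow]

lemma flipSign (a b : ℕ) : (-1:ℝ)^(a+1) * (-1:ℝ)^b * fibZ ((a:ℤ) - b) = fibZ ((b:ℤ) - a) := by
  rcases le_or_gt a b with h | h
  · rcases Nat.eq_or_lt_of_le h with rfl | h
    · simp [show (a:ℤ) - a = ((0:ℕ):ℤ) from by ring, fibZ_ofNat]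
      simp [show fibZ 0 = 0 from by simp [fibZ]]
    · obtain ⟨s, rfl⟩ : ∃ s, b = a + s + 1 := ⟨b - a - 1, by omega⟩
      rw [show (a:ℤ) - (a+s+1:ℕ) = -((s:ℤ)+1) from by push_cast; ring,
          show ((a+s+1:ℕ):ℤ) - a = ((s+1:ℕ):ℤ) from by push_cast; ring,
          fibZ_neg, fibZ_ofNat, ← mul_assoc]
      rw [← pow_add, ← pow_add, neg_one_pow_congr_mod2 (a+1+(a+s+1)+(s+2)) 0 (by omega)]
      norm_num
  · obtain ⟨s, rfl⟩ : ∃ s, a = b + s + 1 := ⟨a - b - 1, by omega⟩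
    rw [show ((b+s+1:ℕ):ℤ) - b = ((s+1:ℕ):ℤ) from by push_cast; ring,
        show (b:ℤ) - (b+s+1:ℕ) = -((s:ℤ)+1) from by push_cast; ring,
        fibZ_neg, fibZ_ofNat]
    rw [← pow_add, neg_one_pow_congr_mod2 (b+s+1+1+b) (s+2) (by omega)]

lemma innerlem (n j : ℕ) (hj : j ≤ n) :
    ∑ k ∈ Finset.range (n+1), (n.choose k : ℝ) * (-1:ℝ)^(k-1) * (Nat.fib k : ℝ) * (k.choose j : ℝ)
      = (n.choose j : ℝ) * fibZ ((n:ℤ) - 2*j) := by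
  have hsub : Finset.Ico j (n+1) ⊆ Finset.range (n+1) := by
    intro x hx; simp at hx ⊢; omega
  rw [← Finset.sum_subset hsub (by
    intro x hx hnx
    simp at hx hnx
    rw [Nat.choose_eq_zero_of_lt (by omega : x < j)]
    simp)]
  rw [Finset.sum_Ico_eq_sum_range]
  have hm : n + 1 - j = (n - j) + 1 := by omega
  set m := n - j with hmdef
  rw [hm]
  have hterm : ∀ i ∈ Finset.range (m+1),
      (n.choose (j+i) : ℝ) * (-1:ℝ)^(j+i-1) * (Nat.fib (j+i) : ℝ) * ((j+i).choose j : ℝ)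
      = ((n.choose j : ℝ) * ((-1:ℝ)^(j+1) * (-1:ℝ)^m)) * ((m.choose i : ℝ) * (-1:ℝ)^i * (Nat.fib (i+j) : ℝ)) * ((-1:ℝ)^m) := by
    intro i hi
    simp only [Finset.mem_range] at hi
    have hle : j + i ≤ n := by omega
    have hcm : (n.choose (j+i) : ℝ) * ((j+i).choose j : ℝ) = (n.choose j : ℝ) * (m.choose i : ℝ) := by
      have := Nat.choose_mul (n := n) (Nat.le_add_right j i)
      rw [Nat.add_sub_cancel_left] at this
      exact_mod_cast congrArg (Nat.cast : ℕ → ℝ) this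
    have hs : (-1:ℝ)^(j+i-1) * (Nat.fib (j+i) : ℝ) = (-1:ℝ)^(j+1) * (-1:ℝ)^i * (Nat.fib (i+j) : ℝ) := by
      rw [sign_fib (j+i), show j+i+1 = (j+1)+i from by ring, pow_add, show j+i = i+j from by ring]
    calc (n.choose (j+i) : ℝ) * (-1:ℝ)^(j+i-1) * (Nat.fib (j+i) : ℝ) * ((j+i).choose j : ℝ)
        = ((n.choose (j+i) : ℝ) * ((j+i).choose j : ℝ)) * ((-1:ℝ)^(j+i-1) * (Nat.fib (j+i) : ℝ)) := by ring
      _ = ((n.choose j : ℝ) * (m.choose i : ℝ)) * ((-1:ℝ)^(j+1) * (-1:ℝ)^i * (Nat.fib (i+j) : ℝ)) := by rw [hcm, hs]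
      _ = _ := by
          have hm2 : ((-1:ℝ)^m) * ((-1:ℝ)^m) = 1 := by
            rw [← pow_add, ← two_mul, pow_mul]; norm_num
          linear_combination (-((n.choose j : ℝ) * (m.choose i : ℝ) * ((-1:ℝ)^(j+1) * (-1:ℝ)^i * (Nat.fib (i+j) : ℝ)))) * hm2
  rw [Finset.sum_congr rfl hterm]
  rw [← Finset.sum_mul, ← Finset.mul_sum, key_s18 m j]
  have hm2 : ((-1:ℝ)^m) * ((-1:ℝ)^m) = 1 := by
    rw [← pow_add, ← two_mul, pow_mul]; norm_num
  have hf : fibZ ((m:ℤ) - j) = fibZ ((n:ℤ) - 2*j) := by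
    rw [show (m:ℤ) - j = (n:ℤ) - 2*j from by rw [hmdef, Nat.cast_sub hj]; ring]
  have hre : (n.choose j : ℝ) * ((-1:ℝ)^(j+1)*(-1:ℝ)^m) * ((-1:ℝ)^m * fibZ ((j:ℤ) - m)) * (-1:ℝ)^m
      = (n.choose j : ℝ) * ((-1:ℝ)^(j+1)*(-1:ℝ)^m * fibZ ((j:ℤ) - m)) * ((-1:ℝ)^m*(-1:ℝ)^m) := by ring
  rw [hre, hm2, flipSign j m, hf, mul_one]

theorem stmt_18 (c d : ℕ → ℝ)
    (hc : ∀ n, c n = ∑ k ∈ Finset.range (n+1), (n.choose k : ℝ) * d k)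
    (n : ℕ) :
    ∑ k ∈ Finset.range (n+1), (n.choose k : ℝ) * (-1 : ℝ)^(k - 1) * (Nat.fib k : ℝ) * c k =
      ∑ m ∈ Finset.range (n+1), (n.choose m : ℝ) * d m * fibZ ((n : ℤ) - 2 * m) := by
  have hLHS : ∑ k ∈ Finset.range (n+1), (n.choose k : ℝ) * (-1 : ℝ)^(k - 1) * (Nat.fib k : ℝ) * c k
      = ∑ k ∈ Finset.range (n+1), ∑ j ∈ Finset.range (n+1),
          (n.choose k : ℝ) * (-1 : ℝ)^(k - 1) * (Nat.fib k : ℝ) * ((k.choose j : ℝ) * d j) := by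
    apply Finset.sum_congr rfl
    intro k hk
    simp only [Finset.mem_range] at hk
    have hext : c k = ∑ j ∈ Finset.range (n+1), (k.choose j : ℝ) * d j := by
      rw [hc k]
      apply Finset.sum_subset
      · intro x hx; simp only [Finset.mem_range] at hx ⊢; omega
      · intro x _ hnx
        simp only [Finset.mem_range] at hnx
        rw [Nat.choose_eq_zero_of_lt (by omega : k < x)]
        simp
    rw [hext, Finset.mul_sum]
  rw [hLHS, Finset.sum_comm]
  apply Finset.sum_congr rfl
  intro j hj
  simp only [Finset.mem_range] at hj
  have hinner := innerlem n j (by omega)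
  calc ∑ k ∈ Finset.range (n+1),
        (n.choose k : ℝ) * (-1 : ℝ)^(k - 1) * (Nat.fib k : ℝ) * ((k.choose j : ℝ) * d j)
      = (∑ k ∈ Finset.range (n+1),
          (n.choose k : ℝ) * (-1 : ℝ)^(k - 1) * (Nat.fib k : ℝ) * (k.choose j : ℝ)) * d j := by
        rw [Finset.sum_mul]; apply Finset.sum_congr rfl; intro k _; ring
    _ = (n.choose j : ℝ) * fibZ ((n:ℤ) - 2*j) * d j := by rw [hinner]
    _ = (n.choose j : ℝ) * d j * fibZ ((n:ℤ) - 2*j) := by ring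
end

section
/- For all n ≥ 0, ∑_{k=0}^n C(n,k) * B k * (F k + F_{n-2k}) = 0, where B k are the Bernoulli numbers (with B 1 = -1/2) and F is the Fibonacci sequence extended to negative indices by F_{-j} = (-1)^{j+1} F j. -/
/-- Fibonacci sequence extended to integer indices: `fibZQ (-j) = (-1)^(j+1) * fib j`. -/
def fibZQ (z : ℤ) : ℚ :=
  if 0 ≤ z then (Nat.fib z.toNat : ℚ) else (-1 : ℚ)^((-z).toNat + 1) * (Nat.fib (-z).toNat : ℚ)

open Polynomial in
lemma bern_comp_one_sub (n : ℕ) :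
    (Polynomial.bernoulli n).comp (1 - Polynomial.X) =
      Polynomial.C ((-1:ℚ)^n) * Polynomial.bernoulli n := by
  induction n with
  | zero => simp
  | succ n ih =>
    set f : ℚ[X] := (Polynomial.bernoulli (n+1)).comp (1 - X) -
      C ((-1:ℚ)^(n+1)) * Polynomial.bernoulli (n+1) with hf
    have hder : derivative f = 0 := by
      rw [hf, derivative_sub, derivative_comp_one_sub_X, derivative_bernoulli_add_one,
        derivative_C_mul, derivative_bernoulli_add_one]
      rw [mul_comp, ih]
      have : ((n:ℚ[X]) + 1).comp (1 - X) = (n:ℚ[X]) + 1 := by simp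
      rw [this]
      have hC : (Polynomial.C ((-1:ℚ)^(n+1))) = -Polynomial.C ((-1:ℚ)^n) := by
        rw [pow_succ]; rw [mul_neg_one, map_neg]
      rw [hC]
      ring
    have hc := Polynomial.eq_C_of_derivative_eq_zero hder
    have h0 : f.eval 0 = 0 := by
      rw [hf]
      simp only [eval_sub, eval_comp, eval_sub, eval_one, eval_X, sub_zero, eval_mul, eval_C]
      rw [Polynomial.bernoulli_eval_one, Polynomial.bernoulli_eval_zero,
        bernoulli'_eq_bernoulli]
      ring
    have : f = 0 := by
      rw [hc, Polynomial.coeff_zero_eq_eval_zero, h0, map_zero]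
    exact sub_eq_zero.mp this

open Polynomial in
lemma bern_comp_one_add (n : ℕ) :
    (Polynomial.bernoulli n).comp (1 + Polynomial.X) =
      Polynomial.bernoulli n + (n : ℚ[X]) * Polynomial.X ^ (n-1) := by
  apply Polynomial.funext
  intro x
  simp only [eval_comp, eval_add, eval_one, eval_X, eval_mul, eval_natCast, eval_pow]
  exact Polynomial.bernoulli_eval_one_add n x

noncomputable def bA (n : ℕ) (x : ℝ) : ℝ := Polynomial.aeval x (Polynomial.bernoulli n)

lemma bA_one_sub (n : ℕ) (x : ℝ) : bA n (1 - x) = (-1)^n * bA n x := by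
  have h := congrArg (Polynomial.aeval (R := ℚ) x) (bern_comp_one_sub n)
  rw [Polynomial.aeval_comp] at h
  simpa [bA, map_sub, map_one] using h

lemma bA_one_add (n : ℕ) (x : ℝ) : bA n (1 + x) = bA n x + n * x ^ (n-1) := by
  have h := congrArg (Polynomial.aeval (R := ℚ) x) (bern_comp_one_add n)
  rw [Polynomial.aeval_comp] at h
  simpa [bA] using h

lemma bA_expand (n : ℕ) (x : ℝ) :
    bA n x = ∑ i ∈ Finset.range (n+1), (bernoulli i : ℝ) * (n.choose i : ℝ) * x ^ (n - i) := by
  rw [bA, Polynomial.bernoulli, map_sum]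
  refine Finset.sum_congr rfl fun i _ => ?_
  simp only [Polynomial.aeval_monomial, eq_ratCast]
  push_cast
  ring

lemma key_T (n : ℕ) (x y : ℝ) (h : x * y = 1) :
    ∑ k ∈ Finset.range (n+1), (n.choose k : ℝ) * (bernoulli k : ℝ) * x ^ k
      = x ^ n * bA n y := by
  rw [bA_expand, Finset.mul_sum]
  refine Finset.sum_congr rfl fun i hi => ?_
  have hi' : i ≤ n := Nat.lt_succ_iff.mp (Finset.mem_range.mp hi)
  have : x ^ n * y ^ (n - i) = x ^ i := by
    have hxn : x ^ n = x ^ i * x ^ (n - i) := by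
      rw [← pow_add, Nat.add_sub_cancel' hi']
    rw [hxn, mul_assoc, ← mul_pow, h, one_pow, mul_one]
  rw [← this]
  ring

open goldenRatio Real in
lemma fib_sqrt (k : ℕ) : (Nat.fib k : ℝ) * √5 = φ^k - ψ^k := by
  have h5 : (0:ℝ) < √5 := Real.sqrt_pos.mpr (by norm_num)
  rw [Real.coe_fib_eq, div_mul_cancel₀ _ (ne_of_gt h5)]

open goldenRatio Real in
lemma fibZQ_sqrt (z : ℤ) : ((fibZQ z : ℚ) : ℝ) * √5 = φ^z - ψ^z := by
  rcases le_or_gt 0 z with hz | hz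
  · rw [fibZQ, if_pos hz]
    push_cast
    rw [fib_sqrt, ← zpow_natCast φ, ← zpow_natCast ψ, Int.toNat_of_nonneg hz]
  · rw [fibZQ, if_neg (not_le.mpr hz)]
    set m := (-z).toNat with hm
    have hzm : z = -(m : ℤ) := by
      rw [hm, Int.toNat_of_nonneg (by omega)]; ring
    have hphi : (φ:ℝ)^z = (-1)^m * ψ^m := by
      rw [hzm, zpow_neg, zpow_natCast, ← inv_pow, inv_goldenRatio, neg_pow]
    have hpsi : (ψ:ℝ)^z = (-1)^m * φ^m := by
      rw [hzm, zpow_neg, zpow_natCast, ← inv_pow, inv_goldenConj, neg_pow]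
    rw [hphi, hpsi]
    push_cast
    calc ((-1:ℝ))^(m+1) * (Nat.fib m : ℝ) * √5
        = (-1:ℝ)^(m+1) * ((Nat.fib m : ℝ) * √5) := by ring
      _ = (-1:ℝ)^(m+1) * (φ^m - ψ^m) := by rw [fib_sqrt]
      _ = (-1)^m * ψ^m - (-1)^m * φ^m := by rw [pow_succ]; ring

lemma final_alg (m : ℕ) (p a N : ℝ) (hp : p ≠ 0) (q : ℝ) (hq : q = -p⁻¹) :
    p^(m+1) * (a - N * (-q)^m) - q^(m+1) * ((-1)^(m+1)*a - N * (-p)^m)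
      + (p^(m+1) * ((q^2)^(m+1) * (a + N * p^m))
        - q^(m+1) * ((p^2)^(m+1) * ((-1)^(m+1)*a + N * q^m))) = 0 := by
  subst hq
  have h2 : ((-p⁻¹ : ℝ)^2) = (p^2)⁻¹ := by rw [neg_pow, inv_pow]; ring
  rcases Nat.even_or_odd m with he | he
  · have e1 : ((-1:ℝ))^m = 1 := he.neg_one_pow
    have e2 : ((-1:ℝ))^(m+1) = -1 := (he.add_one).neg_one_pow
    simp only [h2, neg_pow, inv_pow, e1, e2]
    field_simp
    ring
  · have e1 : ((-1:ℝ))^m = -1 := he.neg_one_pow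
    have e2 : ((-1:ℝ))^(m+1) = 1 := (he.add_one).neg_one_pow
    simp only [h2, neg_pow, inv_pow, e1, e2]
    field_simp
    ring


open goldenRatio Real in
theorem stmt_19 (n : ℕ) :
    ∑ k ∈ Finset.range (n+1), (n.choose k : ℚ) * bernoulli k *
      ((Nat.fib k : ℚ) + fibZQ ((n : ℤ) - 2 * k)) = 0 := by

  have h5 : (0:ℝ) < √5 := Real.sqrt_pos.mpr (by norm_num)
  apply (Rat.cast_injective (α := ℝ))
  push_cast
  have hmul : (∑ k ∈ Finset.range (n+1), (n.choose k : ℝ) * (bernoulli k : ℝ) *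
      ((Nat.fib k : ℝ) + ((fibZQ ((n : ℤ) - 2 * k) : ℚ) : ℝ))) * √5 = 0 := by
    rw [Finset.sum_mul]
    have hterm : ∀ k ∈ Finset.range (n+1),
        (n.choose k : ℝ) * (bernoulli k : ℝ) *
          ((Nat.fib k : ℝ) + ((fibZQ ((n : ℤ) - 2 * k) : ℚ) : ℝ)) * √5
        = ((n.choose k : ℝ) * (bernoulli k : ℝ) * φ^k
            - (n.choose k : ℝ) * (bernoulli k : ℝ) * ψ^k)
          + (φ^n * ((n.choose k : ℝ) * (bernoulli k : ℝ) * (ψ^2)^k)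
            - ψ^n * ((n.choose k : ℝ) * (bernoulli k : ℝ) * (φ^2)^k)) := by
      intro k _
      have hze : (n:ℤ) - 2*(k:ℤ) = (n:ℤ) + (-(((2*k:ℕ)):ℤ)) := by push_cast; ring
      have hphiz : (φ:ℝ)^((n:ℤ) - 2*(k:ℤ)) = φ^n * (ψ^2)^k := by
        rw [hze, zpow_add₀ goldenRatio_ne_zero, zpow_natCast, zpow_neg, zpow_natCast,
          ← inv_pow, inv_goldenRatio, pow_mul, neg_sq]
      have hpsiz : (ψ:ℝ)^((n:ℤ) - 2*(k:ℤ)) = ψ^n * (φ^2)^k := by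
        rw [hze, zpow_add₀ goldenConj_ne_zero, zpow_natCast, zpow_neg, zpow_natCast,
          ← inv_pow, inv_goldenConj, pow_mul, neg_sq]
      have expand : (n.choose k : ℝ) * (bernoulli k : ℝ) *
          ((Nat.fib k : ℝ) + ((fibZQ ((n : ℤ) - 2 * k) : ℚ) : ℝ)) * √5
          = (n.choose k : ℝ) * (bernoulli k : ℝ) *
            (((Nat.fib k : ℝ) * √5) + (((fibZQ ((n : ℤ) - 2 * k) : ℚ) : ℝ) * √5)) := by ring
      rw [expand, fib_sqrt, fibZQ_sqrt, hphiz, hpsiz]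
      ring
    rw [Finset.sum_congr rfl hterm, Finset.sum_add_distrib, Finset.sum_sub_distrib,
      Finset.sum_sub_distrib, ← Finset.mul_sum, ← Finset.mul_sum]
    rw [key_T n φ (-ψ) (by rw [mul_neg, goldenRatio_mul_goldenConj]; norm_num),
      key_T n ψ (-φ) (by rw [mul_neg, goldenConj_mul_goldenRatio]; norm_num),
      key_T n (ψ^2) (φ^2) (by rw [← mul_pow, goldenConj_mul_goldenRatio]; norm_num),
      key_T n (φ^2) (ψ^2) (by rw [← mul_pow, goldenRatio_mul_goldenConj]; norm_num)]
    rcases n with _ | m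
    · norm_num [bA, Polynomial.bernoulli_eval_zero]
    · have hA1 : bA (m+1) (-ψ) = bA (m+1) φ - ((m+1 : ℕ) : ℝ) * (-ψ)^m := by
        have h := bA_one_add (m+1) (-ψ)
        rw [show (1:ℝ) + -ψ = φ by rw [← one_sub_goldenRatio]; ring, Nat.add_sub_cancel] at h
        linarith
      have hA2 : bA (m+1) (-φ) = bA (m+1) ψ - ((m+1 : ℕ) : ℝ) * (-φ)^m := by
        have h := bA_one_add (m+1) (-φ)
        rw [show (1:ℝ) + -φ = ψ by rw [← one_sub_goldenConj]; ring, Nat.add_sub_cancel] at h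
        linarith
      have hA3 : bA (m+1) (φ^2) = bA (m+1) φ + ((m+1 : ℕ) : ℝ) * φ^m := by
        have h := bA_one_add (m+1) φ
        rw [show (1:ℝ) + φ = φ^2 by rw [goldenRatio_sq]; ring, Nat.add_sub_cancel] at h
        linarith
      have hA4 : bA (m+1) (ψ^2) = bA (m+1) ψ + ((m+1 : ℕ) : ℝ) * ψ^m := by
        have h := bA_one_add (m+1) ψ
        rw [show (1:ℝ) + ψ = ψ^2 by rw [goldenConj_sq]; ring, Nat.add_sub_cancel] at h
        linarith
      have hA5 : bA (m+1) ψ = (-1)^(m+1) * bA (m+1) φ := by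
        have h := bA_one_sub (m+1) φ
        rwa [one_sub_goldenConj] at h
      rw [hA1, hA2, hA3, hA4, hA5]
      linear_combination final_alg m φ (bA (m+1) φ) ((m+1 : ℕ) : ℝ) goldenRatio_ne_zero ψ
        (by rw [inv_goldenRatio]; ring)
  rcases mul_eq_zero.mp hmul with h | h
  · exact h
  · exact absurd h (ne_of_gt h5)
end
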